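/- arXiv:1706.02830 — 8 statements merged into one kernel-verified Lean document; each statement's English description precedes it below -/
import Mathlib

section
/- For every n, the number of triangles in any simple graph G on n vertices that contains no cycle of length 5 as a subgraph is at most the maximum number of edges in a simple graph on n vertices that contains neither a cycle of length 4 nor a cycle of length 5 as a subgraph. -/
set_option maxHeartbeats 1000000

/-- A graph is `C5`-free if it contains no cycle of length 5 as a subgraph. -/
def C5Free {V : Type*} (G : SimpleGraph V) : Prop :=
  ∀ (v : V) (w : G.Walk v v), w.IsCycle → w.length ≠ 5

/-- A graph is `C4`-free if it contains no cycle of length 4 as a subgraph. -/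
def C4Free {V : Type*} (G : SimpleGraph V) : Prop :=
  ∀ (v : V) (w : G.Walk v v), w.IsCycle → w.length ≠ 4

open SimpleGraph

variable {V : Type*}

def NoC5 (G : SimpleGraph V) : Prop :=
  ∀ a b c d e : V, G.Adj a b → G.Adj b c → G.Adj c d → G.Adj d e → G.Adj e a →
    a ≠ c → a ≠ d → b ≠ d → b ≠ e → c ≠ e → False

lemma noC5_of_C5Free {G : SimpleGraph V} (h : C5Free G) : NoC5 G := by
  intro a b c d e h1 h2 h3 h4 h5 hac had hbd hbe hce
  refine h a (.cons h1 (.cons h2 (.cons h3 (.cons h4 (.cons h5 .nil))))) ?_ (by simp)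
  have hab := h1.ne
  have hbc := h2.ne
  have hcd := h3.ne
  have hde := h4.ne
  have hea := h5.ne
  rw [SimpleGraph.Walk.isCycle_def, SimpleGraph.Walk.isTrail_def]
  simp only [SimpleGraph.Walk.edges_cons, SimpleGraph.Walk.edges_nil,
    SimpleGraph.Walk.support_cons, SimpleGraph.Walk.support_nil, List.tail_cons,
    List.nodup_cons, List.mem_cons, List.not_mem_nil, or_false, List.mem_singleton,
    List.nodup_nil, and_true, Sym2.eq_iff, ne_eq, not_or]
  have := hab.symm; have := hbc.symm; have := hcd.symm; have := hde.symm
  have := hea.symm; have := hac.symm; have := had.symm; have := hbd.symm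
  have := hbe.symm; have := hce.symm
  refine ⟨?_, by simp, by tauto⟩
  repeat' apply And.intro
  all_goals intro hh
  all_goals try obtain ⟨hh1, hh2⟩ := hh
  all_goals subst_vars
  all_goals simp_all

lemma c5free_of_noC5 {G : SimpleGraph V} (h : NoC5 G) : C5Free G := by
  intro v w hc hlen
  cases w with
  | nil => simp at hlen
  | cons h1 p =>
    cases p with
    | nil => simp at hlen
    | cons h2 p =>
      cases p with
      | nil => simp at hlen
      | cons h3 p =>
        cases p with
        | nil => simp at hlen
        | cons h4 p =>
          cases p with
          | nil => simp at hlen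
          | cons h5 p =>
            cases p with
            | cons h6 p => simp [SimpleGraph.Walk.length_cons] at hlen
            | nil =>
              have hs := hc.2
              simp only [SimpleGraph.Walk.support_cons, SimpleGraph.Walk.support_nil,
                List.tail_cons, List.nodup_cons, List.mem_cons, List.not_mem_nil, or_false,
                List.mem_singleton, List.nodup_nil, and_true, not_or] at hs
              exact h _ _ _ _ _ h1 h2 h3 h4 h5 (Ne.symm hs.2.1.2.2) (Ne.symm hs.2.2.1.2)
                hs.1.2.1 hs.1.2.2.1 hs.2.1.2.1

def NoC4 (G : SimpleGraph V) : Prop :=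
  ∀ a b c d : V, G.Adj a b → G.Adj b c → G.Adj c d → G.Adj d a →
    a ≠ c → b ≠ d → False

lemma c4free_of_noC4 {G : SimpleGraph V} (h : NoC4 G) : C4Free G := by
  intro v w hc hlen
  cases w with
  | nil => simp at hlen
  | cons h1 p =>
    cases p with
    | nil => simp at hlen
    | cons h2 p =>
      cases p with
      | nil => simp at hlen
      | cons h3 p =>
        cases p with
        | nil => simp at hlen
        | cons h4 p =>
          cases p with
          | cons h5 p => simp [SimpleGraph.Walk.length_cons] at hlen
          | nil =>
            have hs := hc.2
            simp only [SimpleGraph.Walk.support_cons, SimpleGraph.Walk.support_nil,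
              List.tail_cons, List.nodup_cons, List.mem_cons, List.not_mem_nil, or_false,
              List.mem_singleton, List.nodup_nil, and_true, not_or] at hs
            exact h _ _ _ _ h1 h2 h3 h4 (Ne.symm hs.2.1.2) hs.1.2.1

section Comb

variable {V : Type*} [LinearOrder V] {G : SimpleGraph V}
set_option linter.unusedSectionVars false

/-- `t` together with some outside vertex forms a `K4`. -/
def K4t (G : SimpleGraph V) (t : Finset V) : Prop := ∃ x, x ∉ t ∧ ∀ y ∈ t, G.Adj x y

/-- the edge `t \ {r}` lies in a second triangle -/
def Act (G : SimpleGraph V) (t : Finset V) (r : V) : Prop :=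
  r ∈ t ∧ ∃ z, z ∉ t ∧ ∀ y ∈ t, y ≠ r → G.Adj z y

lemma clique_adj {s : Finset V} {m : ℕ} (h : G.IsNClique m s) {x y : V}
    (hx : x ∈ s) (hy : y ∈ s) (hxy : x ≠ y) : G.Adj x y :=
  h.1 (by exact_mod_cast hx) (by exact_mod_cast hy) hxy

/-- any common neighbour of two vertices of a `K4` lies in the `K4` -/
lemma mem_of_adj2 (h5 : NoC5 G) {K : Finset V} (hK : G.IsNClique 4 K) {p q z : V}
    (hp : p ∈ K) (hq : q ∈ K) (hpq : p ≠ q) (hzp : G.Adj z p) (hzq : G.Adj z q) :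
    z ∈ K := by
  by_contra hz
  have hqK : q ∈ K.erase p := Finset.mem_erase.mpr ⟨hpq.symm, hq⟩
  have hc : ((K.erase p).erase q).card = 2 := by
    rw [Finset.card_erase_of_mem hqK, Finset.card_erase_of_mem hp, hK.2]
  obtain ⟨s1, s2, hs12, hset⟩ := Finset.card_eq_two.mp hc
  have hs1 : s1 ∈ (K.erase p).erase q := by rw [hset]; simp
  have hs2 : s2 ∈ (K.erase p).erase q := by rw [hset]; simp
  have hs1q : s1 ≠ q := (Finset.mem_erase.mp hs1).1
  have hs1p : s1 ≠ p := (Finset.mem_erase.mp (Finset.mem_erase.mp hs1).2).1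
  have hs1K : s1 ∈ K := (Finset.mem_erase.mp (Finset.mem_erase.mp hs1).2).2
  have hs2q : s2 ≠ q := (Finset.mem_erase.mp hs2).1
  have hs2p : s2 ≠ p := (Finset.mem_erase.mp (Finset.mem_erase.mp hs2).2).1
  have hs2K : s2 ∈ K := (Finset.mem_erase.mp (Finset.mem_erase.mp hs2).2).2
  exact h5 z p s1 s2 q hzp (clique_adj hK hp hs1K hs1p.symm)
    (clique_adj hK hs1K hs2K hs12) (clique_adj hK hs2K hq hs2q)
    hzq.symm (fun h => hz (h ▸ hs1K)) (fun h => hz (h ▸ hs2K)) hs2p.symm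
    hpq hs1q

/-- two triangles through different edges of a triangle force K4 or C5 -/
lemma L1 (h5 : NoC5 G) {u v c x y : V} (huv : G.Adj u v) (huc : G.Adj u c)
    (hvc : G.Adj v c) (hxu : G.Adj x u) (hxv : G.Adj x v) (hyu : G.Adj y u)
    (hyc : G.Adj y c) (hxc : x ≠ c) (hyv : y ≠ v) (hxy : x ≠ y) : False :=
  h5 v x u y c hxv.symm hxu hyu.symm hyc hvc.symm huv.ne.symm hyv.symm hxy hxc huc.ne

lemma act_unique (h5 : NoC5 G) {t : Finset V} (ht : G.IsNClique 3 t)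
    (hnK : ¬K4t G t) {r1 r2 : V} (h1 : Act G t r1) (h2 : Act G t r2) : r1 = r2 := by
  by_contra hne
  obtain ⟨hr1, z1, hz1, ha1⟩ := h1
  obtain ⟨hr2, z2, hz2, ha2⟩ := h2
  have hr2e : r2 ∈ t.erase r1 := Finset.mem_erase.mpr ⟨Ne.symm hne, hr2⟩
  have hc : ((t.erase r1).erase r2).card = 1 := by
    rw [Finset.card_erase_of_mem hr2e, Finset.card_erase_of_mem hr1, ht.2]
  obtain ⟨s, hset⟩ := Finset.card_eq_one.mp hc
  have hs : s ∈ (t.erase r1).erase r2 := by rw [hset]; simp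
  have hsr2 : s ≠ r2 := (Finset.mem_erase.mp hs).1
  have hsr1 : s ≠ r1 := (Finset.mem_erase.mp (Finset.mem_erase.mp hs).2).1
  have hst : s ∈ t := (Finset.mem_erase.mp (Finset.mem_erase.mp hs).2).2
  have hteq : t = {r1, r2, s} := by
    apply (Finset.eq_of_subset_of_card_le ?_ ?_).symm
    · intro y hy
      simp only [Finset.mem_insert, Finset.mem_singleton] at hy
      rcases hy with rfl | rfl | rfl <;> assumption
    · rw [ht.2, Finset.card_insert_of_notMem (by simp [hne, Ne.symm hsr1]),
        Finset.card_insert_of_notMem (by simp [Ne.symm hsr2]), Finset.card_singleton]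
  have hz1r2 : G.Adj z1 r2 := ha1 r2 hr2 (Ne.symm hne)
  have hz1s : G.Adj z1 s := ha1 s hst hsr1
  have hz2r1 : G.Adj z2 r1 := ha2 r1 hr1 hne
  have hz2s : G.Adj z2 s := ha2 s hst hsr2
  by_cases hzz : z1 = z2
  · subst hzz
    refine hnK ⟨z1, hz1, ?_⟩
    intro y hy
    rw [hteq] at hy
    simp only [Finset.mem_insert, Finset.mem_singleton] at hy
    rcases hy with rfl | rfl | rfl
    · exact hz2r1
    · exact hz1r2
    · exact hz1s
  · exact L1 h5 (clique_adj ht hst hr2 hsr2) (clique_adj ht hst hr1 hsr1)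
      (clique_adj ht hr2 hr1 (Ne.symm hne)) hz1s hz1r2 hz2s hz2r1
      (fun h => hz1 (h ▸ hr1)) (fun h => hz2 (h ▸ hr2)) hzz

variable [Nonempty V]

open Classical in
noncomputable def pg (G : SimpleGraph V) (t : Finset V) : V :=
  if h : ∃ r, Act G t r then h.choose
  else
    match t.sort (· ≤ ·) with
    | [_, _, c] => c
    | _ => Classical.arbitrary V

noncomputable def uB (G : SimpleGraph V) (t : Finset V) : V :=
  match (t.erase (pg G t)).sort (· ≤ ·) with
  | [u, _] => u
  | _ => Classical.arbitrary V

open Classical in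
noncomputable def apx (G : SimpleGraph V) (t : Finset V) : V :=
  if h : K4t G t then h.choose else Classical.arbitrary V

noncomputable def k4e (K : Finset V) (p : V) : Sym2 V :=
  match K.sort (· ≤ ·) with
  | [a, b, c, d] =>
    if p = a then s(b, c) else if p = b then s(a, c)
    else if p = c then s(a, b) else s(a, d)
  | _ => s(Classical.arbitrary V, Classical.arbitrary V)

open Classical in
noncomputable def assignE (G : SimpleGraph V) (t : Finset V) : Sym2 V :=
  if K4t G t then k4e (insert (apx G t) t) (apx G t) else s(uB G t, pg G t)

lemma sort2 {t : Finset V} (h : t.card = 2) :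
    ∃ a b : V, a < b ∧ t.sort (· ≤ ·) = [a, b] ∧ t = {a, b} := by
  have hl : (t.sort (· ≤ ·)).length = 2 := by rw [Finset.length_sort, h]
  have hs := (Finset.sortedLT_sort t).pairwise
  rcases hm : t.sort (· ≤ ·) with _ | ⟨a, _ | ⟨b, _ | ⟨c, l⟩⟩⟩ <;>
    rw [hm] at hl <;> simp at hl
  rw [hm] at hs
  refine ⟨a, b, by simpa using hs, rfl, ?_⟩
  apply Finset.ext
  intro x
  rw [← Finset.mem_sort (· ≤ ·), hm]
  simp

lemma sort3 {t : Finset V} (h : t.card = 3) :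
    ∃ a b c : V, a < b ∧ b < c ∧ t.sort (· ≤ ·) = [a, b, c] ∧ t = {a, b, c} := by
  have hl : (t.sort (· ≤ ·)).length = 3 := by rw [Finset.length_sort, h]
  have hs := (Finset.sortedLT_sort t).pairwise
  rcases hm : t.sort (· ≤ ·) with _ | ⟨a, _ | ⟨b, _ | ⟨c, _ | ⟨d, l⟩⟩⟩⟩ <;>
    rw [hm] at hl <;> simp at hl
  rw [hm] at hs
  simp only [List.pairwise_cons, List.mem_cons, List.mem_singleton, List.not_mem_nil] at hs
  refine ⟨a, b, c, ?_, ?_, rfl, ?_⟩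
  · exact hs.1 b (by simp)
  · exact hs.2.1 c (by simp)
  · apply Finset.ext
    intro x
    rw [← Finset.mem_sort (· ≤ ·), hm]
    simp

lemma sort4 {t : Finset V} (h : t.card = 4) :
    ∃ a b c d : V, a < b ∧ b < c ∧ c < d ∧ t.sort (· ≤ ·) = [a, b, c, d] ∧
      t = {a, b, c, d} := by
  have hl : (t.sort (· ≤ ·)).length = 4 := by rw [Finset.length_sort, h]
  have hs := (Finset.sortedLT_sort t).pairwise
  rcases hm : t.sort (· ≤ ·) with _ | ⟨a, _ | ⟨b, _ | ⟨c, _ | ⟨d, _ | ⟨e, l⟩⟩⟩⟩⟩ <;>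
    rw [hm] at hl <;> simp at hl
  rw [hm] at hs
  simp only [List.pairwise_cons, List.mem_cons, List.mem_singleton, List.not_mem_nil] at hs
  refine ⟨a, b, c, d, ?_, ?_, ?_, rfl, ?_⟩
  · exact hs.1 b (by simp)
  · exact hs.2.1 c (by simp)
  · exact hs.2.2.1 d (by simp)
  · apply Finset.ext
    intro x
    rw [← Finset.mem_sort (· ≤ ·), hm]
    simp

noncomputable def Kof (G : SimpleGraph V) (t : Finset V) : Finset V :=
  insert (apx G t) t

lemma apx_spec {t : Finset V} (h4 : K4t G t) :
    apx G t ∉ t ∧ ∀ y ∈ t, G.Adj (apx G t) y := by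
  rw [apx, dif_pos h4]; exact h4.choose_spec

lemma Kof_clique {t : Finset V} (ht : G.IsNClique 3 t) (h4 : K4t G t) :
    G.IsNClique 4 (Kof G t) := by
  obtain ⟨hnm, hadj⟩ := apx_spec h4
  constructor
  · intro x hx y hy hxy
    simp only [Kof, Finset.coe_insert, Set.mem_insert_iff, Finset.mem_coe] at hx hy
    rcases hx with rfl | hx
    · rcases hy with rfl | hy
      · exact absurd rfl hxy
      · exact hadj y hy
    · rcases hy with rfl | hy
      · exact (hadj x hx).symm
      · exact clique_adj ht hx hy hxy
  · rw [Kof, Finset.card_insert_of_notMem hnm, ht.2]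

lemma mem_Kof {t : Finset V} (y : V) (hy : y ∈ t) : y ∈ Kof G t :=
  Finset.mem_insert_of_mem hy

lemma apx_unique (h5 : NoC5 G) {t : Finset V} (ht : G.IsNClique 3 t) (h4 : K4t G t)
    {x : V} (hx : x ∉ t) (hadj : ∀ y ∈ t, G.Adj x y) : x = apx G t := by
  by_contra hne
  obtain ⟨p, hp, q, hq, hpq⟩ := Finset.one_lt_card.mp (by rw [ht.2]; norm_num)
  have hmem : x ∈ Kof G t :=
    mem_of_adj2 h5 (Kof_clique ht h4) (mem_Kof p hp) (mem_Kof q hq) hpq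
      (hadj p hp) (hadj q hq)
  rcases Finset.mem_insert.mp hmem with h | h
  · exact hne h
  · exact hx h

lemma K_unique (h5 : NoC5 G) {K K' : Finset V} (hK : G.IsNClique 4 K)
    (hK' : G.IsNClique 4 K') {p q : V} (hpq : p ≠ q) (hpK : p ∈ K) (hqK : q ∈ K)
    (hpK' : p ∈ K') (hqK' : q ∈ K') : K = K' := by
  apply Finset.eq_of_subset_of_card_le _ (by rw [hK.2, hK'.2])
  intro y hy
  by_cases hyp : y = p
  · exact hyp ▸ hpK'
  by_cases hyq : y = q
  · exact hyq ▸ hqK'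
  exact mem_of_adj2 h5 hK' hpK' hqK' hpq (clique_adj hK hy hpK hyp)
    (clique_adj hK hy hqK hyq)

lemma pg_act {t : Finset V} (h : ∃ r, Act G t r) : Act G t (pg G t) := by
  rw [pg, dif_pos h]; exact h.choose_spec

lemma pg_mem {t : Finset V} (ht : G.IsNClique 3 t) : pg G t ∈ t := by
  by_cases h : ∃ r, Act G t r
  · exact (pg_act h).1
  · obtain ⟨a, b, c, _, _, hm, hteq⟩ := sort3 ht.2
    rw [pg, dif_neg h, hm, hteq]
    simp

lemma act_pg (h5 : NoC5 G) {t : Finset V} (ht : G.IsNClique 3 t) (hnK : ¬K4t G t)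
    {r : V} (ha : Act G t r) : r = pg G t :=
  act_unique h5 ht hnK ha (pg_act ⟨r, ha⟩)

lemma assignN_spec (h5 : NoC5 G) {t : Finset V} (ht : G.IsNClique 3 t)
    (hnK : ¬K4t G t) :
    ∃ u v : V, u ∈ t ∧ v ∈ t ∧ u ≠ v ∧ u ≠ pg G t ∧ v ≠ pg G t ∧
      t = {u, v, pg G t} ∧
      assignE G t = s(u, pg G t) ∧
      ∀ z, G.Adj z u → G.Adj z (pg G t) → z = v := by
  have hpg := pg_mem ht
  have hc2 : (t.erase (pg G t)).card = 2 := by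
    rw [Finset.card_erase_of_mem hpg, ht.2]
  obtain ⟨u, v, huv, hm, hseteq⟩ := sort2 hc2
  have hu : u ∈ t.erase (pg G t) := by rw [hseteq]; simp
  have hv : v ∈ t.erase (pg G t) := by rw [hseteq]; simp
  have hut : u ∈ t := (Finset.mem_erase.mp hu).2
  have hvt : v ∈ t := (Finset.mem_erase.mp hv).2
  have hup : u ≠ pg G t := (Finset.mem_erase.mp hu).1
  have hvp : v ≠ pg G t := (Finset.mem_erase.mp hv).1
  refine ⟨u, v, hut, hvt, huv.ne, hup, hvp, ?_, ?_, ?_⟩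
  · have h' := (Finset.insert_erase hpg).symm
    rw [hseteq] at h'
    conv_lhs => rw [h']
    ext w; simp; tauto
  · rw [assignE, if_neg hnK, uB, hm]
  · intro z hzu hzpg
    by_contra hne
    have hzt : z ∉ t := by
      intro hzt
      have : z ∈ t.erase (pg G t) := Finset.mem_erase.mpr ⟨hzpg.ne, hzt⟩
      rw [hseteq] at this
      simp only [Finset.mem_insert, Finset.mem_singleton] at this
      rcases this with rfl | rfl
      · exact hzu.ne rfl
      · exact hne rfl
    have hact : Act G t v := by
      refine ⟨hvt, z, hzt, ?_⟩
      intro y hy hyv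
      by_cases hyp : y = pg G t
      · exact hyp ▸ hzpg
      have : y ∈ t.erase (pg G t) := Finset.mem_erase.mpr ⟨hyp, hy⟩
      rw [hseteq] at this
      simp only [Finset.mem_insert, Finset.mem_singleton] at this
      rcases this with rfl | rfl
      · exact hzu
      · exact absurd rfl hyv
    exact hvp (act_pg h5 ht hnK hact)

lemma k4e_mem {K : Finset V} {a b c d : V} (hab : a < b) (hbc : b < c) (hcd : c < d)
    (hsort : K.sort (· ≤ ·) = [a, b, c, d]) (hKeq : K = {a, b, c, d}) (p : V) :
    ∃ x y : V, k4e K p = s(x, y) ∧ x ∈ K ∧ y ∈ K ∧ x ≠ y := by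
  have ha : a ∈ K := by rw [hKeq]; simp
  have hb : b ∈ K := by rw [hKeq]; simp
  have hc : c ∈ K := by rw [hKeq]; simp
  have hd : d ∈ K := by rw [hKeq]; simp
  have heq : k4e K p =
      (if p = a then s(b, c) else if p = b then s(a, c)
       else if p = c then s(a, b) else s(a, d)) := by
    rw [k4e, hsort]
  have w1 := hab.ne'
  have w2 := hbc.ne'
  have w3 := (hab.trans hbc).ne'
  rw [heq]
  by_cases h1 : p = a
  · exact ⟨b, c, by simp [h1], hb, hc, hbc.ne⟩
  by_cases h2 : p = b
  · exact ⟨a, c, by simp [h1, h2, w1], ha, hc, (hab.trans hbc).ne⟩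
  by_cases h3 : p = c
  · exact ⟨a, b, by simp [h1, h2, h3, w2, w3], ha, hb, hab.ne⟩
  · exact ⟨a, d, by simp [h1, h2, h3], ha, hd, (hab.trans (hbc.trans hcd)).ne⟩


lemma k4e_inj {K : Finset V} {a b c d : V} (hab : a < b) (hbc : b < c) (hcd : c < d)
    (hsort : K.sort (· ≤ ·) = [a, b, c, d]) {p p' : V} (hp : p ∈ K) (hp' : p' ∈ K)
    (he : k4e K p = k4e K p') : p = p' := by
  have hmem : ∀ x : V, x ∈ K → x = a ∨ x = b ∨ x = c ∨ x = d := by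
    intro x hx
    have := (Finset.mem_sort (α := V) (· ≤ ·)).mpr hx
    rw [hsort] at this
    simpa using this
  have n1 : a ≠ b := hab.ne
  have n2 : b ≠ c := hbc.ne
  have n3 : c ≠ d := hcd.ne
  have n4 : a ≠ c := (hab.trans hbc).ne
  have n5 : b ≠ d := (hbc.trans hcd).ne
  have n6 : a ≠ d := (hab.trans (hbc.trans hcd)).ne
  have heq : ∀ q : V, k4e K q =
      (if q = a then s(b, c) else if q = b then s(a, c)
       else if q = c then s(a, b) else s(a, d)) := by
    intro q; rw [k4e, hsort]
  have m1 : b ≠ a := n1.symm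
  have m2 : c ≠ b := n2.symm
  have m3 : d ≠ c := n3.symm
  have m4 : c ≠ a := n4.symm
  have m5 : d ≠ b := n5.symm
  have m6 : d ≠ a := n6.symm
  rw [heq p, heq p'] at he
  rcases hmem p hp with rfl | rfl | rfl | rfl <;>
    rcases hmem p' hp' with rfl | rfl | rfl | rfl <;>
    first
      | rfl
      | (clear hmem heq hp hp' hsort
         simp_all [Sym2.eq_iff])

lemma assignK_endpoints {t : Finset V} (ht : G.IsNClique 3 t) (h4 : K4t G t) :
    ∃ x y : V, assignE G t = s(x, y) ∧ x ∈ Kof G t ∧ y ∈ Kof G t ∧ x ≠ y := by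
  have hK := Kof_clique ht h4
  obtain ⟨a, b, c, d, hab, hbc, hcd, hsort, hKeq⟩ := sort4 hK.2
  obtain ⟨x, y, hval, hx, hy, hxy⟩ := k4e_mem hab hbc hcd hsort hKeq (apx G t)
  rw [assignE, if_pos h4]
  exact ⟨x, y, hval, hx, hy, hxy⟩

lemma assign_adj (h5 : NoC5 G) {t : Finset V} (ht : G.IsNClique 3 t) {x y : V}
    (h : assignE G t = s(x, y)) : G.Adj x y := by
  by_cases h4 : K4t G t
  · obtain ⟨x0, y0, hval, hx0, hy0, hne⟩ := assignK_endpoints ht h4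
    rw [h] at hval
    rcases Sym2.eq_iff.mp hval.symm with ⟨rfl, rfl⟩ | ⟨rfl, rfl⟩
    · exact clique_adj (Kof_clique ht h4) hx0 hy0 hne
    · exact (clique_adj (Kof_clique ht h4) hx0 hy0 hne).symm
  · obtain ⟨u, v, hut, hvt, huv, hup, hvp, hteq, hval, hstar⟩ := assignN_spec h5 ht h4
    rw [h] at hval
    rcases Sym2.eq_iff.mp hval.symm with ⟨rfl, rfl⟩ | ⟨rfl, rfl⟩
    · exact clique_adj ht hut (pg_mem ht) hup
    · exact (clique_adj ht hut (pg_mem ht) hup).symm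

lemma assign_common (h5 : NoC5 G) {t : Finset V} (ht : G.IsNClique 3 t) {x y : V}
    (h : assignE G t = s(x, y)) : ∃ r, G.Adj r x ∧ G.Adj r y := by
  by_cases h4 : K4t G t
  · obtain ⟨x0, y0, hval, hx0, hy0, hne⟩ := assignK_endpoints ht h4
    have hK := Kof_clique ht h4
    have hy0e : y0 ∈ (Kof G t).erase x0 := Finset.mem_erase.mpr ⟨hne.symm, hy0⟩
    have hc : (((Kof G t).erase x0).erase y0).card = 2 := by
      rw [Finset.card_erase_of_mem hy0e, Finset.card_erase_of_mem hx0, hK.2]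
    have hpos : 0 < (((Kof G t).erase x0).erase y0).card := by omega
    obtain ⟨r, hr⟩ := Finset.card_pos.mp hpos
    have hry0 : r ≠ y0 := (Finset.mem_erase.mp hr).1
    have hrx0 : r ≠ x0 := (Finset.mem_erase.mp (Finset.mem_erase.mp hr).2).1
    have hrK : r ∈ Kof G t := (Finset.mem_erase.mp (Finset.mem_erase.mp hr).2).2
    rw [h] at hval
    rcases Sym2.eq_iff.mp hval.symm with ⟨rfl, rfl⟩ | ⟨rfl, rfl⟩
    · exact ⟨r, clique_adj hK hrK hx0 hrx0, clique_adj hK hrK hy0 hry0⟩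
    · exact ⟨r, clique_adj hK hrK hy0 hry0, clique_adj hK hrK hx0 hrx0⟩
  · obtain ⟨u, v, hut, hvt, huv, hup, hvp, hteq, hval, hstar⟩ := assignN_spec h5 ht h4
    rw [h] at hval
    have hvu : G.Adj v u := clique_adj ht hvt hut (Ne.symm huv)
    have hvp' : G.Adj v (pg G t) := clique_adj ht hvt (pg_mem ht) hvp
    rcases Sym2.eq_iff.mp hval.symm with ⟨rfl, rfl⟩ | ⟨rfl, rfl⟩
    · exact ⟨v, hvu, hvp'⟩
    · exact ⟨v, hvp', hvu⟩

lemma K4t_of_sub {t K : Finset V} (ht : G.IsNClique 3 t) (hK : G.IsNClique 4 K)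
    (hsub : t ⊆ K) : K4t G t := by
  have hc : (K \ t).card = 1 := by rw [Finset.card_sdiff_of_subset hsub, hK.2, ht.2]
  obtain ⟨x, hx⟩ := Finset.card_eq_one.mp hc
  have hxm : x ∈ K \ t := by rw [hx]; simp
  have hxK : x ∈ K := (Finset.mem_sdiff.mp hxm).1
  have hxt : x ∉ t := (Finset.mem_sdiff.mp hxm).2
  exact ⟨x, hxt, fun y hy => clique_adj hK hxK (hsub hy) (fun h => hxt (h ▸ hy))⟩

lemma no_N_in_K4 (h5 : NoC5 G) {t : Finset V} (ht : G.IsNClique 3 t)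
    (hnK : ¬K4t G t) {K : Finset V} (hK : G.IsNClique 4 K) {x y : V}
    (hval : assignE G t = s(x, y)) (hxK : x ∈ K) (hyK : y ∈ K) : False := by
  obtain ⟨u, v, hut, hvt, huv, hup, hvp, hteq, hval2, hstar⟩ := assignN_spec h5 ht hnK
  rw [hval] at hval2
  have huK : u ∈ K ∧ pg G t ∈ K := by
    rcases Sym2.eq_iff.mp hval2.symm with ⟨rfl, rfl⟩ | ⟨rfl, rfl⟩
    · exact ⟨hxK, hyK⟩
    · exact ⟨hyK, hxK⟩
  have hvK : v ∈ K := mem_of_adj2 h5 hK huK.1 huK.2 hup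
    (clique_adj ht hvt hut (Ne.symm huv)) (clique_adj ht hvt (pg_mem ht) hvp)
  have hsub : t ⊆ K := by
    rw [hteq]
    intro w hw
    simp only [Finset.mem_insert, Finset.mem_singleton] at hw
    rcases hw with rfl | rfl | rfl
    · exact huK.1
    · exact hvK
    · exact huK.2
  exact hnK (K4t_of_sub ht hK hsub)

lemma assign_inj (h5 : NoC5 G) {t t' : Finset V} (ht : G.IsNClique 3 t)
    (ht' : G.IsNClique 3 t') (he : assignE G t = assignE G t') : t = t' := by
  by_cases h4 : K4t G t <;> by_cases h4' : K4t G t'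
  · obtain ⟨x, y, hval, hx, hy, hxy⟩ := assignK_endpoints ht h4
    obtain ⟨x', y', hval', hx', hy', hxy'⟩ := assignK_endpoints ht' h4'
    have hxy'K : x ∈ Kof G t' ∧ y ∈ Kof G t' := by
      have : s(x', y') = s(x, y) := by rw [← hval, ← hval', he]
      rcases Sym2.eq_iff.mp this with ⟨rfl, rfl⟩ | ⟨rfl, rfl⟩
      · exact ⟨hx', hy'⟩
      · exact ⟨hy', hx'⟩
    have hKK : Kof G t = Kof G t' :=
      K_unique h5 (Kof_clique ht h4) (Kof_clique ht' h4') hxy hx hy hxy'K.1 hxy'K.2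
    obtain ⟨a, b, c, d, hab, hbc, hcd, hsort, hKeq⟩ := sort4 (Kof_clique ht h4).2
    have e1 : assignE G t = k4e (Kof G t) (apx G t) := by
      rw [assignE, if_pos h4]; rfl
    have e2 : assignE G t' = k4e (Kof G t') (apx G t') := by
      rw [assignE, if_pos h4']; rfl
    have hax : apx G t = apx G t' := by
      apply k4e_inj hab hbc hcd hsort (Finset.mem_insert_self _ _)
        (hKK ▸ Finset.mem_insert_self (apx G t') t')
      calc k4e (Kof G t) (apx G t) = assignE G t := e1.symm
        _ = assignE G t' := he
        _ = k4e (Kof G t') (apx G t') := e2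
        _ = k4e (Kof G t) (apx G t') := by rw [hKK]
    have ht1 : t = (Kof G t).erase (apx G t) :=
      (Finset.erase_insert (apx_spec h4).1).symm
    have ht2 : t' = (Kof G t').erase (apx G t') :=
      (Finset.erase_insert (apx_spec h4').1).symm
    rw [ht1, ht2, hKK, hax]
  · obtain ⟨x, y, hval, hx, hy, hxy⟩ := assignK_endpoints ht h4
    exact absurd (no_N_in_K4 h5 ht' h4' (Kof_clique ht h4)
      (he.symm.trans hval) hx hy) not_false
  · obtain ⟨x, y, hval, hx, hy, hxy⟩ := assignK_endpoints ht' h4'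
    exact absurd (no_N_in_K4 h5 ht h4 (Kof_clique ht' h4')
      (he.trans hval) hx hy) not_false
  · obtain ⟨u, v, hut, hvt, huv, hup, hvp, hteq, hval, hstar⟩ := assignN_spec h5 ht h4
    obtain ⟨u', v', hut', hvt', huv', hup', hvp', hteq', hval', hstar'⟩ :=
      assignN_spec h5 ht' h4'
    have hor := Sym2.eq_iff.mp (hval.symm.trans (he.trans hval'))
    rcases hor with ⟨h1, h2⟩ | ⟨h1, h2⟩
    · have hv'u : G.Adj v' u := h1 ▸ clique_adj ht' hvt' hut' (Ne.symm huv')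
      have hv'p : G.Adj v' (pg G t) := h2 ▸ clique_adj ht' hvt' (pg_mem ht') hvp'
      have hvv : v' = v := hstar v' hv'u hv'p
      rw [hteq, hteq', ← h1, ← h2, hvv]
    · have hv'u : G.Adj v' u := by
        have := clique_adj ht' hvt' (pg_mem ht') hvp'
        rwa [← h1] at this
      have hv'p : G.Adj v' (pg G t) := by
        have := clique_adj ht' hvt' hut' (Ne.symm huv')
        rwa [← h2] at this
      have hvv : v' = v := hstar v' hv'u hv'p
      rw [hteq, hteq', hvv, ← h1, h2]
      ext w; simp; tauto

lemma k4e_range {K : Finset V} {a b c d : V}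
    (hsort : K.sort (· ≤ ·) = [a, b, c, d]) (p : V) :
    k4e K p = s(b, c) ∨ k4e K p = s(a, c) ∨ k4e K p = s(a, b) ∨ k4e K p = s(a, d) := by
  have heq : k4e K p =
      (if p = a then s(b, c) else if p = b then s(a, c)
       else if p = c then s(a, b) else s(a, d)) := by
    rw [k4e, hsort]
  rw [heq]
  split_ifs <;> tauto

noncomputable def Haux (G : SimpleGraph V) : SimpleGraph V :=
  SimpleGraph.fromEdgeSet (assignE G '' {t : Finset V | G.IsNClique 3 t})

lemma Haux_adj {x y : V} : (Haux G).Adj x y ↔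
    (∃ t, G.IsNClique 3 t ∧ assignE G t = s(x, y)) ∧ x ≠ y := by
  rw [Haux, SimpleGraph.fromEdgeSet_adj]
  simp [Set.mem_image]

lemma Haux_le (h5 : NoC5 G) {x y : V} (h : (Haux G).Adj x y) : G.Adj x y := by
  obtain ⟨⟨t, ht, hval⟩, hne⟩ := Haux_adj.mp h
  exact assign_adj h5 ht hval

lemma Haux_common (h5 : NoC5 G) {x y : V} (h : (Haux G).Adj x y) :
    ∃ r, G.Adj r x ∧ G.Adj r y := by
  obtain ⟨⟨t, ht, hval⟩, hne⟩ := Haux_adj.mp h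
  exact assign_common h5 ht hval

lemma noC5_Haux (h5 : NoC5 G) : NoC5 (Haux G) := by
  intro a b c d e h1 h2 h3 h4 h5' hac had hbd hbe hce
  exact h5 a b c d e (Haux_le h5 h1) (Haux_le h5 h2) (Haux_le h5 h3)
    (Haux_le h5 h4) (Haux_le h5 h5') hac had hbd hbe hce

/-- Case B of the C4-freeness argument -/
lemma auxB (h5 : NoC5 G) {w x y z : V}
    (hwx : (Haux G).Adj w x) (hxy : (Haux G).Adj x y) (hyz : (Haux G).Adj y z)
    (hzw : (Haux G).Adj z w) (hwy : G.Adj w y) (hxz : ¬G.Adj x z)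
    (hxzne : x ≠ z) : False := by
  have gwx := Haux_le h5 hwx
  have gxy := Haux_le h5 hxy
  have gyz := Haux_le h5 hyz
  have gzw := Haux_le h5 hzw
  obtain ⟨⟨t1, ht1, hval1⟩, hwxne⟩ := Haux_adj.mp hwx
  obtain ⟨⟨t2, ht2, hval2⟩, hxyne⟩ := Haux_adj.mp hxy
  -- t1 is not K4-type
  have hnK1 : ¬K4t G t1 := by
    intro h4
    obtain ⟨x0, y0, hval, hx0, hy0, hne0⟩ := assignK_endpoints ht1 h4
    have hK1 := Kof_clique ht1 h4
    have hwxK : w ∈ Kof G t1 ∧ x ∈ Kof G t1 := by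
      have : s(x0, y0) = s(w, x) := hval.symm.trans hval1
      rcases Sym2.eq_iff.mp this with ⟨rfl, rfl⟩ | ⟨rfl, rfl⟩
      · exact ⟨hx0, hy0⟩
      · exact ⟨hy0, hx0⟩
    have hyK : y ∈ Kof G t1 :=
      mem_of_adj2 h5 hK1 hwxK.1 hwxK.2 hwxne hwy.symm gxy.symm
    by_cases hzK : z ∈ Kof G t1
    · exact hxz (clique_adj hK1 hwxK.2 hzK hxzne)
    · exact hzK (mem_of_adj2 h5 hK1 hwxK.1 hyK hwy.ne gzw gyz.symm)
  have hnK2 : ¬K4t G t2 := by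
    intro h4
    obtain ⟨x0, y0, hval, hx0, hy0, hne0⟩ := assignK_endpoints ht2 h4
    have hK2 := Kof_clique ht2 h4
    have hxyK : x ∈ Kof G t2 ∧ y ∈ Kof G t2 := by
      have : s(x0, y0) = s(x, y) := hval.symm.trans hval2
      rcases Sym2.eq_iff.mp this with ⟨rfl, rfl⟩ | ⟨rfl, rfl⟩
      · exact ⟨hx0, hy0⟩
      · exact ⟨hy0, hx0⟩
    have hwK : w ∈ Kof G t2 :=
      mem_of_adj2 h5 hK2 hxyK.1 hxyK.2 hxyne gwx hwy
    by_cases hzK : z ∈ Kof G t2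
    · exact hxz (clique_adj hK2 hxyK.1 hzK hxzne)
    · exact hzK (mem_of_adj2 h5 hK2 hwK hxyK.2 hwy.ne gzw gyz.symm)
  obtain ⟨u1, v1, hut1, hvt1, huv1, hup1, hvp1, hteq1, hvalN1, hstar1⟩ :=
    assignN_spec h5 ht1 hnK1
  obtain ⟨u2, v2, hut2, hvt2, huv2, hup2, hvp2, hteq2, hvalN2, hstar2⟩ :=
    assignN_spec h5 ht2 hnK2
  have ho1 := Sym2.eq_iff.mp (hvalN1.symm.trans hval1)
  have ho2 := Sym2.eq_iff.mp (hvalN2.symm.trans hval2)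
  have ht1eq : t1 = {w, x, y} := by
    rcases ho1 with ⟨h1, h2⟩ | ⟨h1, h2⟩
    · have hy : y = v1 := hstar1 y (by rw [h1]; exact hwy.symm) (by rw [h2]; exact gxy.symm)
      rw [hteq1, h1, h2, ← hy]
      ext q; simp; tauto
    · have hy : y = v1 := hstar1 y (by rw [h1]; exact gxy.symm) (by rw [h2]; exact hwy.symm)
      rw [hteq1, h1, h2, ← hy]
      ext q; simp; tauto
  have ht2eq : t2 = {w, x, y} := by
    rcases ho2 with ⟨h1, h2⟩ | ⟨h1, h2⟩
    · have hw : w = v2 := hstar2 w (by rw [h1]; exact gwx) (by rw [h2]; exact hwy)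
      rw [hteq2, h1, h2, ← hw]
      ext q; simp; tauto
    · have hw : w = v2 := hstar2 w (by rw [h1]; exact hwy) (by rw [h2]; exact gwx)
      rw [hteq2, h1, h2, ← hw]
      ext q; simp; tauto
  have e12 : t1 = t2 := ht1eq.trans ht2eq.symm
  have : s(w, x) = s(x, y) := by
    rw [← hval1, ← hval2, e12]
  rcases Sym2.eq_iff.mp this with ⟨h1, h2⟩ | ⟨h1, h2⟩
  · exact hwxne h1
  · exact hwy.ne h1

lemma noC4_Haux (h5 : NoC5 G) : NoC4 (Haux G) := by
  intro w x y z hwx hxy hyz hzw hwy_ne hxz_ne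
  have gwx := Haux_le h5 hwx
  have gxy := Haux_le h5 hxy
  have gyz := Haux_le h5 hyz
  have gzw := Haux_le h5 hzw
  -- a diagonal of the C4 must be a G-edge
  have hdiag : G.Adj w y ∨ G.Adj x z := by
    obtain ⟨r, hrw, hrx⟩ := Haux_common h5 hwx
    have hr : r = y ∨ r = z := by
      by_contra hcon
      push_neg at hcon
      exact h5 r w z y x hrw gzw.symm gyz.symm gxy.symm hrx.symm
        hcon.2 hcon.1 hwy_ne gwx.ne (Ne.symm hxz_ne)
    rcases hr with rfl | rfl
    · exact Or.inl hrw.symm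
    · exact Or.inr hrx.symm
  by_cases hwy : G.Adj w y
  · by_cases hxz : G.Adj x z
    · -- Case A : {w,x,y,z} is a K4 in G
      set K : Finset V := {w, x, y, z} with hKdef
      have hwK : w ∈ K := by simp [hKdef]
      have hxK : x ∈ K := by simp [hKdef]
      have hyK : y ∈ K := by simp [hKdef]
      have hzK : z ∈ K := by simp [hKdef]
      have hKcl : G.IsNClique 4 K := by
        constructor
        · intro p hp q hq hpq
          simp only [hKdef, Finset.coe_insert, Set.mem_insert_iff, Finset.mem_coe,
            Finset.mem_insert, Finset.mem_singleton] at hp hq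
          rcases hp with rfl | rfl | rfl | rfl <;> rcases hq with rfl | rfl | rfl | rfl <;>
            first
              | exact absurd rfl hpq
              | assumption
              | exact gwx.symm
              | exact gxy.symm
              | exact gyz.symm
              | exact gzw.symm
              | exact hwy.symm
              | exact hxz.symm
        · rw [hKdef]
          rw [Finset.card_insert_of_notMem (by simp [gwx.ne, hwy_ne, gzw.ne']),
            Finset.card_insert_of_notMem (by simp [gxy.ne, hxz_ne]),
            Finset.card_insert_of_notMem (by simp [gyz.ne]), Finset.card_singleton]
      -- every Haux edge inside K comes from a K4-type triangle with block K
      have key : ∀ p q : V, (Haux G).Adj p q → p ∈ K → q ∈ K →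
          ∃ t, G.IsNClique 3 t ∧ K4t G t ∧ Kof G t = K ∧ assignE G t = s(p, q) := by
        intro p q hpq hpK hqK
        obtain ⟨⟨t, ht, hval⟩, hne⟩ := Haux_adj.mp hpq
        by_cases h4 : K4t G t
        · refine ⟨t, ht, h4, ?_, hval⟩
          obtain ⟨x0, y0, hval0, hx0, hy0, hne0⟩ := assignK_endpoints ht h4
          have hpqK : p ∈ Kof G t ∧ q ∈ Kof G t := by
            rcases Sym2.eq_iff.mp (hval0.symm.trans hval) with ⟨rfl, rfl⟩ | ⟨rfl, rfl⟩
            · exact ⟨hx0, hy0⟩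
            · exact ⟨hy0, hx0⟩
          exact K_unique h5 (Kof_clique ht h4) hKcl hne hpqK.1 hpqK.2 hpK hqK
        · exact absurd (no_N_in_K4 h5 ht h4 hKcl hval hpK hqK) not_false
      obtain ⟨a, b, c, d, hab, hbc, hcd, hsort, hKeq⟩ := sort4 hKcl.2
      have hrange : ∀ p q : V, (Haux G).Adj p q → p ∈ K → q ∈ K →
          s(p, q) = s(b, c) ∨ s(p, q) = s(a, c) ∨ s(p, q) = s(a, b) ∨ s(p, q) = s(a, d) := by
        intro p q hpq hpK hqK
        obtain ⟨t, ht, h4, hKof, hval⟩ := key p q hpq hpK hqK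
        have : assignE G t = k4e K (apx G t) := by
          rw [assignE, if_pos h4, ← hKof]; rfl
        rw [← hval, this]
        exact k4e_range hsort (apx G t)
      have hda : d ≠ a := ((hab.trans hbc).trans hcd).ne'
      have hdb : d ≠ b := (hbc.trans hcd).ne'
      have hdc : d ≠ c := hcd.ne'
      have honly : ∀ p q : V, (Haux G).Adj p q → p ∈ K → q ∈ K → d ∈ s(p, q) →
          s(p, q) = s(a, d) := by
        intro p q hpq hpK hqK hd
        rcases hrange p q hpq hpK hqK with h | h | h | h <;> rw [h] at hd ⊢ <;>
          simp only [Sym2.mem_iff] at hd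
        · rcases hd with rfl | rfl
          · exact absurd rfl hdb
          · exact absurd rfl hdc
        · rcases hd with rfl | rfl
          · exact absurd rfl hda
          · exact absurd rfl hdc
        · rcases hd with rfl | rfl
          · exact absurd rfl hda
          · exact absurd rfl hdb
      have hdK : d ∈ K := by rw [hKeq]; simp
      rw [hKdef] at hdK
      simp only [Finset.mem_insert, Finset.mem_singleton] at hdK
      rcases hdK with rfl | rfl | rfl | rfl
      · have e1 := honly _ _ hwx hwK hxK (by simp)
        have e2 := honly _ _ hzw hzK hwK (by simp)
        rcases Sym2.eq_iff.mp (e1.trans e2.symm) with ⟨h1, h2⟩ | ⟨h1, h2⟩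
        · exact gzw.ne h1.symm
        · exact hxz_ne h2
      · have e1 := honly _ _ hwx hwK hxK (by simp)
        have e2 := honly _ _ hxy hxK hyK (by simp)
        rcases Sym2.eq_iff.mp (e1.trans e2.symm) with ⟨h1, h2⟩ | ⟨h1, h2⟩
        · exact gwx.ne h1
        · exact hwy_ne h1
      · have e1 := honly _ _ hxy hxK hyK (by simp)
        have e2 := honly _ _ hyz hyK hzK (by simp)
        rcases Sym2.eq_iff.mp (e1.trans e2.symm) with ⟨h1, h2⟩ | ⟨h1, h2⟩
        · exact gxy.ne h1
        · exact hxz_ne h1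
      · have e1 := honly _ _ hyz hyK hzK (by simp)
        have e2 := honly _ _ hzw hzK hwK (by simp)
        rcases Sym2.eq_iff.mp (e1.trans e2.symm) with ⟨h1, h2⟩ | ⟨h1, h2⟩
        · exact gyz.ne h1
        · exact hwy_ne h1.symm
    · exact auxB h5 hwx hxy hyz hzw hwy hxz hxz_ne
  · by_cases hxz : G.Adj x z
    · exact auxB h5 hxy hyz hzw hwx hxz (fun h => hwy h.symm) (Ne.symm hwy_ne)
    · rcases hdiag with h | h
      · exact hwy h
      · exact hxz h

lemma assign_exists (h5 : NoC5 G) {t : Finset V} (ht : G.IsNClique 3 t) :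
    ∃ x y : V, assignE G t = s(x, y) ∧ x ≠ y := by
  by_cases h4 : K4t G t
  · obtain ⟨x, y, hval, _, _, hne⟩ := assignK_endpoints ht h4
    exact ⟨x, y, hval, hne⟩
  · obtain ⟨u, v, _, _, _, hup, _, _, hval, _⟩ := assignN_spec h5 ht h4
    exact ⟨u, pg G t, hval, hup⟩

end Comb

theorem triangles_le_max_C4C5_free_edges (n : ℕ) (G : SimpleGraph (Fin n))
    (hG : C5Free G) :
    {t : Finset (Fin n) | G.IsNClique 3 t}.ncard ≤
      sSup {m : ℕ | ∃ H : SimpleGraph (Fin n), C4Free H ∧ C5Free H ∧ H.edgeSet.ncard = m} := by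
  classical
  rcases Set.eq_empty_or_nonempty {t : Finset (Fin n) | G.IsNClique 3 t} with hT | hT
  · rw [hT, Set.ncard_empty]
    exact Nat.zero_le _
  obtain ⟨t0, ht0⟩ := hT
  obtain ⟨v0, _⟩ := Finset.card_pos.mp (by rw [ht0.2]; norm_num : 0 < t0.card)
  haveI : Nonempty (Fin n) := ⟨v0⟩
  have h5 : NoC5 G := noC5_of_C5Free hG
  have hinj : Set.InjOn (assignE G) {t : Finset (Fin n) | G.IsNClique 3 t} :=
    fun t ht t' ht' h => assign_inj h5 ht ht' h
  have hcard : (assignE G '' {t : Finset (Fin n) | G.IsNClique 3 t}).ncard =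
      {t : Finset (Fin n) | G.IsNClique 3 t}.ncard := Set.ncard_image_of_injOn hinj
  have hedge : (Haux G).edgeSet = assignE G '' {t : Finset (Fin n) | G.IsNClique 3 t} := by
    rw [Haux, SimpleGraph.edgeSet_fromEdgeSet]
    apply sdiff_eq_self_iff_disjoint.mpr
    rw [Set.disjoint_left]
    rintro e hdiag ⟨t, ht, rfl⟩
    obtain ⟨x, y, hval, hne⟩ := assign_exists h5 ht
    rw [hval] at hdiag
    simp only [Set.mem_setOf_eq, Sym2.mem_diagSet, Sym2.isDiag_iff_proj_eq] at hdiag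
    exact absurd hdiag hne
  apply le_csSup
  · refine ⟨Nat.card (Sym2 (Fin n)), ?_⟩
    rintro m ⟨H, _, _, rfl⟩
    have hle : H.edgeSet.ncard ≤ (Set.univ : Set (Sym2 (Fin n))).ncard :=
      Set.ncard_le_ncard (Set.subset_univ _) Set.finite_univ
    simpa [Set.ncard_univ] using hle
  · exact ⟨Haux G, c4free_of_noC4 (noC4_Haux h5), c5free_of_noC5 (noC5_Haux h5),
      by rw [hedge, hcard]⟩
end

section
/- Let G be a simple graph that contains no cycle of length 5 as a subgraph. Then there exists a subgraph H of G (on the same vertex set, with edge set contained in that of G) such that H contains no cycle of length 4 and no cycle of length 5 as a subgraph, and the number of edges of H equals the number of triangles of G. -/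
set_option linter.unusedSectionVars false

open SimpleGraph

namespace C45Aux

variable {V : Type*}

section Basic
variable {G : SimpleGraph V}

lemma c5false (hG : C5Free G) {a b c d e : V}
    (h1 : G.Adj a b) (h2 : G.Adj b c) (h3 : G.Adj c d) (h4 : G.Adj d e) (h5 : G.Adj e a)
    (hac : a ≠ c) (had : a ≠ d) (hbd : b ≠ d) (hbe : b ≠ e) (hce : c ≠ e) : False := by
  have hab := h1.ne; have hbc := h2.ne; have hcd := h3.ne; have hde := h4.ne; have hea := h5.ne
  refine hG a
    (Walk.cons h1 (Walk.cons h2 (Walk.cons h3 (Walk.cons h4 (Walk.cons h5 Walk.nil))))) ?_ (by simp)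
  rw [Walk.isCycle_def]
  refine ⟨?_, by simp, ?_⟩
  · rw [Walk.isTrail_def]
    simp only [Walk.edges_cons, Walk.edges_nil, List.nodup_cons, List.mem_cons, List.not_mem_nil,
      or_false, List.nodup_nil, Sym2.eq_iff]
    push_neg
    constructor <;> constructor <;> try constructor
    all_goals tauto
  · simp only [Walk.support_cons, Walk.support_nil, List.tail_cons, List.nodup_cons,
      List.mem_cons, List.not_mem_nil, or_false, List.nodup_nil, and_true]
    push_neg
    tauto

/-- Two distinct common neighbours. -/
def Multi (G : SimpleGraph V) (x y : V) : Prop :=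
  ∃ z w, z ≠ w ∧ G.Adj x z ∧ G.Adj y z ∧ G.Adj x w ∧ G.Adj y w

lemma Multi.symm {x y : V} (h : Multi G x y) : Multi G y x := by
  obtain ⟨z, w, h1, h2, h3, h4, h5⟩ := h; exact ⟨z, w, h1, h3, h2, h5, h4⟩

/-- Extendable to a `K4`. -/
def K4ext (G : SimpleGraph V) (t : Finset V) : Prop := ∃ w, ∀ x ∈ t, G.Adj w x

end Basic

section Lin
variable [LinearOrder V] {G : SimpleGraph V}

lemma two_of_K4 {s : Finset V} (hs : G.IsNClique 4 s) {x y : V}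
    (hx : x ∈ s) (hy : y ∈ s) (hxy : x ≠ y) :
    ∃ u v, u ≠ v ∧ u ∈ s ∧ v ∈ s ∧ u ≠ x ∧ u ≠ y ∧ v ≠ x ∧ v ≠ y ∧
      (s.erase x).erase y = {u, v} := by
  have hy' : y ∈ s.erase x := Finset.mem_erase.2 ⟨hxy.symm, hy⟩
  have hcard : ((s.erase x).erase y).card = 2 := by
    rw [Finset.card_erase_of_mem hy', Finset.card_erase_of_mem hx, hs.2]
  obtain ⟨u, v, huv, he⟩ := Finset.card_eq_two.1 hcard
  have hu : u ∈ (s.erase x).erase y := by rw [he]; simp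
  have hv : v ∈ (s.erase x).erase y := by rw [he]; simp
  simp only [Finset.mem_erase] at hu hv
  exact ⟨u, v, huv, hu.2.2, hv.2.2, hu.2.1, hu.1, hv.2.1, hv.1, he⟩

lemma adj_of_K4 {s : Finset V} (hs : G.IsNClique 4 s) {x y : V}
    (hx : x ∈ s) (hy : y ∈ s) (hxy : x ≠ y) : G.Adj x y :=
  hs.1 (Finset.mem_coe.2 hx) (Finset.mem_coe.2 hy) hxy

lemma multi_of_K4 {s : Finset V} (hs : G.IsNClique 4 s) {x y : V}
    (hx : x ∈ s) (hy : y ∈ s) (hxy : x ≠ y) : Multi G x y := by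
  obtain ⟨u, v, huv, hu, hv, hux, huy, hvx, hvy, -⟩ := two_of_K4 hs hx hy hxy
  exact ⟨u, v, huv, adj_of_K4 hs hx hu hux.symm, adj_of_K4 hs hy hu huy.symm,
    adj_of_K4 hs hx hv hvx.symm, adj_of_K4 hs hy hv hvy.symm⟩

lemma mem_of_common (hG : C5Free G) {s : Finset V} (hs : G.IsNClique 4 s)
    {x y z : V} (hx : x ∈ s) (hy : y ∈ s) (hxy : x ≠ y)
    (hzx : G.Adj z x) (hzy : G.Adj z y) : z ∈ s := by
  by_contra hz
  obtain ⟨u, v, huv, hu, hv, hux, huy, hvx, hvy, -⟩ := two_of_K4 hs hx hy hxy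
  have hzu : z ≠ u := fun h => hz (h ▸ hu)
  have hzv : z ≠ v := fun h => hz (h ▸ hv)
  exact c5false hG hzx (adj_of_K4 hs hx hu hux.symm) (adj_of_K4 hs hu hv huv)
    (adj_of_K4 hs hv hy hvy) hzy.symm hzu hzv hvx.symm hxy huy

lemma K4_unique (hG : C5Free G) {s s' : Finset V}
    (hs : G.IsNClique 4 s) (hs' : G.IsNClique 4 s') {x y : V}
    (hx : x ∈ s) (hy : y ∈ s) (hx' : x ∈ s') (hy' : y ∈ s') (hxy : x ≠ y) : s = s' := by
  have hsub : s ⊆ s' := by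
    intro z hz
    rcases eq_or_ne z x with rfl | hzx
    · exact hx'
    rcases eq_or_ne z y with rfl | hzy
    · exact hy'
    exact mem_of_common hG hs' hx' hy' hxy (adj_of_K4 hs hz hx hzx)
      (adj_of_K4 hs hz hy hzy)
  exact Finset.eq_of_subset_of_card_le hsub (by rw [hs.2, hs'.2])

lemma third_vertex {t : Finset V} (ht : G.IsNClique 3 t) {x y : V}
    (hx : x ∈ t) (hy : y ∈ t) (hxy : x ≠ y) :
    ∃ z, G.Adj z x ∧ G.Adj z y ∧ t = {x, y, z} := by
  have hy' : y ∈ t.erase x := Finset.mem_erase.2 ⟨hxy.symm, hy⟩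
  have hcard : ((t.erase x).erase y).card = 1 := by
    rw [Finset.card_erase_of_mem hy', Finset.card_erase_of_mem hx, ht.2]
  obtain ⟨z, hz⟩ := Finset.card_eq_one.1 hcard
  have hzm : z ∈ (t.erase x).erase y := by rw [hz]; simp
  simp only [Finset.mem_erase] at hzm
  obtain ⟨hzy, hzx, hzt⟩ := hzm
  refine ⟨z, ht.1 (Finset.mem_coe.2 hzt) (Finset.mem_coe.2 hx) hzx,
    ht.1 (Finset.mem_coe.2 hzt) (Finset.mem_coe.2 hy) hzy, ?_⟩
  apply Finset.eq_of_subset_of_card_le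
  · intro u hu
    simp only [Finset.mem_insert, Finset.mem_singleton] at *
    by_contra h
    push_neg at h
    have : u ∈ (t.erase x).erase y := Finset.mem_erase.2 ⟨h.2.1, Finset.mem_erase.2 ⟨h.1, hu⟩⟩
    rw [hz] at this
    exact h.2.2 (Finset.mem_singleton.1 this)
  · have h3 : ({x, y, z} : Finset V).card = 3 := by
      rw [Finset.card_insert_of_notMem (by simp [hxy, Ne.symm hzx]),
        Finset.card_insert_of_notMem (by simp [Ne.symm hzy]), Finset.card_singleton]
    rw [ht.2, h3]


lemma k4ext_of_two_multi (hG : C5Free G) {a b c : V}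
    (hab : G.Adj a b) (hac : G.Adj a c) (hbc : G.Adj b c)
    (h1 : Multi G a b) (h2 : Multi G b c) : K4ext G {a, b, c} := by
  obtain ⟨z, w, hzw, hza, hzb, hwa, hwb⟩ := h1
  obtain ⟨z', w', hzw', hzb', hzc', hwb', hwc'⟩ := h2
  have hx : ∃ x, G.Adj a x ∧ G.Adj b x ∧ x ≠ c := by
    rcases eq_or_ne z c with rfl | hzc
    · exact ⟨w, hwa, hwb, fun h => hzw h.symm⟩
    · exact ⟨z, hza, hzb, hzc⟩
  have hy : ∃ y, G.Adj b y ∧ G.Adj c y ∧ y ≠ a := by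
    rcases eq_or_ne z' a with rfl | hza'
    · exact ⟨w', hwb', hwc', fun h => hzw' h.symm⟩
    · exact ⟨z', hzb', hzc', hza'⟩
  obtain ⟨x, hxa, hxb, hxc⟩ := hx
  obtain ⟨y, hyb, hyc, hya⟩ := hy
  rcases eq_or_ne x y with rfl | hxy
  · refine ⟨x, ?_⟩
    intro v hv
    simp only [Finset.mem_insert, Finset.mem_singleton] at hv
    rcases hv with rfl | rfl | rfl
    · exact hxa.symm
    · exact hxb.symm
    · exact hyc.symm
  · exact absurd (c5false hG hxa.symm hac hyc hyb.symm hxb hxc hxy hya.symm hab.ne hbc.ne.symm) not_false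

/-- The edge chosen for a triangle `t`. -/
noncomputable def pickEdge [Nonempty V] (G : SimpleGraph V) (t : Finset V) : Sym2 V := by
  classical
  exact
    if ht : t.Nonempty then
      if h : K4ext G t then
        if hD : (insert h.choose t).max' (Finset.insert_nonempty _ _) = h.choose then
          s(t.max' ht, h.choose)
        else
          if he : (t.erase ((insert h.choose t).max' (Finset.insert_nonempty _ _))).Nonempty then
            s((t.erase ((insert h.choose t).max' (Finset.insert_nonempty _ _))).min' he,
              (t.erase ((insert h.choose t).max' (Finset.insert_nonempty _ _))).max' he)
          else s(Classical.arbitrary V, Classical.arbitrary V)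
      else
        if hn : ∃ p : V × V, p.1 ∈ t ∧ p.2 ∈ t ∧ G.Adj p.1 p.2 ∧ ¬ Multi G p.1 p.2 then
          s(hn.choose.1, hn.choose.2)
        else s(Classical.arbitrary V, Classical.arbitrary V)
    else s(Classical.arbitrary V, Classical.arbitrary V)

lemma pickEdge_cases [Nonempty V] (hG : C5Free G) {t : Finset V} (ht : G.IsNClique 3 t) :
    (∃ x y, x ∈ t ∧ y ∈ t ∧ G.Adj x y ∧ ¬ Multi G x y ∧ pickEdge G t = s(x, y))
  ∨ (∃ s D, G.IsNClique 4 s ∧ t ⊆ s ∧ D ∈ s ∧ (∀ z ∈ s, z ≤ D) ∧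
      ((D ∉ t ∧ ∃ M, M ∈ t ∧ (∀ z ∈ t, z ≤ M) ∧ pickEdge G t = s(M, D))
     ∨ (D ∈ t ∧ ∃ x y, x ∈ t ∧ y ∈ t ∧ x ≠ y ∧ x ≠ D ∧ y ≠ D ∧ pickEdge G t = s(x, y)))) := by
  classical
  have htne : t.Nonempty := Finset.card_pos.1 (by rw [ht.2]; norm_num)
  by_cases h : K4ext G t
  · right
    set w := h.choose with hw
    have hwadj : ∀ x ∈ t, G.Adj w x := h.choose_spec
    have hwt : w ∉ t := fun hmem => (hwadj w hmem).ne rfl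
    have hs4 : G.IsNClique 4 (insert w t) := ht.insert hwadj
    set s : Finset V := insert w t with hsdef
    set D : V := s.max' (Finset.insert_nonempty _ _) with hDdef
    have hDs : D ∈ s := Finset.max'_mem _ _
    have hDmax : ∀ z ∈ s, z ≤ D := fun z hz => Finset.le_max' _ z hz
    refine ⟨s, D, hs4, Finset.subset_insert _ _, hDs, hDmax, ?_⟩
    by_cases hD : D = w
    · left
      have hDt : D ∉ t := hD ▸ hwt
      refine ⟨hDt, t.max' htne, Finset.max'_mem _ _, fun z hz => Finset.le_max' _ z hz, ?_⟩
      rw [pickEdge]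
      rw [dif_pos htne, dif_pos h, dif_pos (show (insert h.choose t).max'
        (Finset.insert_nonempty _ _) = h.choose from hD)]
      rw [hD]
    · right
      have hDt : D ∈ t := by
        rcases Finset.mem_insert.1 hDs with h' | h'
        · exact absurd h' hD
        · exact h'
      have hcard2 : (t.erase D).card = 2 := by
        rw [Finset.card_erase_of_mem hDt, ht.2]
      have he : (t.erase D).Nonempty := Finset.card_pos.1 (by rw [hcard2]; norm_num)
      have hmin : (t.erase D).min' he ∈ t.erase D := Finset.min'_mem _ _
      have hmax : (t.erase D).max' he ∈ t.erase D := Finset.max'_mem _ _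
      have hne : (t.erase D).min' he ≠ (t.erase D).max' he :=
        ne_of_lt (Finset.min'_lt_max'_of_card _ (by rw [hcard2]; norm_num))
      simp only [Finset.mem_erase] at hmin hmax
      refine ⟨hDt, _, _, hmin.2, hmax.2, hne, hmin.1, hmax.1, ?_⟩
      rw [pickEdge]
      rw [dif_pos htne, dif_pos h, dif_neg (show ¬ (insert h.choose t).max'
        (Finset.insert_nonempty _ _) = h.choose from hD), dif_pos he]
  · left
    have hn : ∃ p : V × V, p.1 ∈ t ∧ p.2 ∈ t ∧ G.Adj p.1 p.2 ∧ ¬ Multi G p.1 p.2 := by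
      obtain ⟨a, b, c, hab, hac, hbc, rfl⟩ := is3Clique_iff.1 ht
      have hat : a ∈ ({a, b, c} : Finset V) := by simp
      have hbt : b ∈ ({a, b, c} : Finset V) := by simp
      have hct : c ∈ ({a, b, c} : Finset V) := by simp
      by_cases h1 : Multi G a b
      · by_cases h2 : Multi G b c
        · exact absurd (k4ext_of_two_multi hG hab hac hbc h1 h2) h
        · exact ⟨(b, c), hbt, hct, hbc, h2⟩
      · exact ⟨(a, b), hat, hbt, hab, h1⟩
    obtain ⟨h1, h2, h3, h4⟩ := hn.choose_spec
    refine ⟨hn.choose.1, hn.choose.2, h1, h2, h3, h4, ?_⟩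
    rw [pickEdge]
    rw [dif_pos htne, dif_neg h, dif_pos hn]


section Graph
variable [Nonempty V]

/-- The chosen subgraph. -/
noncomputable def HG (G : SimpleGraph V) : SimpleGraph V :=
  SimpleGraph.fromEdgeSet (pickEdge G '' {t : Finset V | G.IsNClique 3 t})

lemma pickEdge_adj (hG : C5Free G) {t : Finset V} (ht : G.IsNClique 3 t) :
    ∃ x y, G.Adj x y ∧ pickEdge G t = s(x, y) := by
  rcases pickEdge_cases hG ht with ⟨x, y, _, _, hadj, _, hpe⟩ |
    ⟨s, D, hs4, hts, hDs, _, hbr⟩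
  · exact ⟨x, y, hadj, hpe⟩
  rcases hbr with ⟨hDt, M, hMt, _, hpe⟩ | ⟨hDt, x, y, hxt, hyt, hxy, _, _, hpe⟩
  · exact ⟨M, D, adj_of_K4 hs4 (hts hMt) hDs (fun h => hDt (h ▸ hMt)), hpe⟩
  · exact ⟨x, y, adj_of_K4 hs4 (hts hxt) (hts hyt) hxy, hpe⟩

lemma HG_le (hG : C5Free G) : HG G ≤ G := by
  rw [← edgeSet_subset_edgeSet, HG, edgeSet_fromEdgeSet]
  refine (Set.diff_subset).trans ?_
  rintro e ⟨t, ht, rfl⟩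
  obtain ⟨x, y, hadj, hpe⟩ := pickEdge_adj hG ht
  rw [hpe]; exact hadj

lemma HG_adj (hG : C5Free G) {x y : V} (h : (HG G).Adj x y) :
    ∃ t, G.IsNClique 3 t ∧ pickEdge G t = s(x, y) := by
  rw [HG, fromEdgeSet_adj] at h
  obtain ⟨⟨t, ht, hpe⟩, -⟩ := h
  exact ⟨t, ht, hpe⟩

lemma HG_adj_elim (hG : C5Free G) {x y : V} (h : (HG G).Adj x y) :
    (∃ t, G.IsNClique 3 t ∧ x ∈ t ∧ y ∈ t ∧ ¬ Multi G x y ∧ pickEdge G t = s(x, y))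
  ∨ (∃ s, G.IsNClique 4 s ∧ x ∈ s ∧ y ∈ s) := by
  obtain ⟨t, ht, hpe⟩ := HG_adj hG h
  rcases pickEdge_cases hG ht with ⟨x', y', hx', hy', hadj, hnm, hpe'⟩ |
    ⟨s, D, hs4, hts, hDs, hDmax, hbr⟩
  · rw [hpe'] at hpe
    rcases Sym2.eq_iff.1 hpe with ⟨rfl, rfl⟩ | ⟨rfl, rfl⟩
    · exact Or.inl ⟨t, ht, hx', hy', hnm, hpe'⟩
    · exact Or.inl ⟨t, ht, hy', hx', fun hm => hnm hm.symm, hpe'.trans Sym2.eq_swap⟩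
  · right
    rcases hbr with ⟨hDt, M, hMt, _, hpe'⟩ | ⟨hDt, x', y', hxt, hyt, _, _, _, hpe'⟩
    · rw [hpe'] at hpe
      rcases Sym2.eq_iff.1 hpe with ⟨rfl, rfl⟩ | ⟨rfl, rfl⟩
      · exact ⟨s, hs4, hts hMt, hDs⟩
      · exact ⟨s, hs4, hDs, hts hMt⟩
    · rw [hpe'] at hpe
      rcases Sym2.eq_iff.1 hpe with ⟨rfl, rfl⟩ | ⟨rfl, rfl⟩
      · exact ⟨s, hs4, hts hxt, hts hyt⟩
      · exact ⟨s, hs4, hts hyt, hts hxt⟩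

lemma HG_common (hG : C5Free G) {x y : V} (h : (HG G).Adj x y) :
    ∃ z, G.Adj x z ∧ G.Adj y z := by
  rcases HG_adj_elim hG h with ⟨t, ht, hx, hy, _, _⟩ | ⟨s, hs4, hx, hy⟩
  · obtain ⟨z, hz1, hz2, -⟩ := third_vertex ht hx hy h.ne
    exact ⟨z, hz1.symm, hz2.symm⟩
  · obtain ⟨u, -, -, hu, -, hux, huy, -, -, -⟩ := two_of_K4 hs4 hx hy h.ne
    exact ⟨u, adj_of_K4 hs4 hx hu hux.symm, adj_of_K4 hs4 hy hu huy.symm⟩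

lemma pendant_le (hG : C5Free G) {s : Finset V} (hs4 : G.IsNClique 4 s) {D x : V}
    (hDs : D ∈ s) (hDmax : ∀ z ∈ s, z ≤ D) (hxs : x ∈ s) (hxD : x ≠ D)
    (h : (HG G).Adj D x) : ∀ z ∈ s.erase D, z ≤ x := by
  obtain ⟨t, ht, hpe⟩ := HG_adj hG h
  rcases pickEdge_cases hG ht with ⟨x', y', hx', hy', hadj, hnm, hpe'⟩ |
    ⟨s', D', hs4', hts, hD's, hD'max, hbr⟩
  · rw [hpe'] at hpe
    have : Multi G x' y' := by
      rcases Sym2.eq_iff.1 hpe with ⟨rfl, rfl⟩ | ⟨rfl, rfl⟩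
      · exact multi_of_K4 hs4 hDs hxs (Ne.symm hxD)
      · exact multi_of_K4 hs4 hxs hDs hxD
    exact absurd this hnm
  · rcases hbr with ⟨hD't, M, hMt, hMmax, hpe'⟩ |
      ⟨hD't, x', y', hxt, hyt, hxy', hxD', hyD', hpe'⟩
    · rw [hpe'] at hpe
      have hMs' : M ∈ s' := hts hMt
      have hss' : s = s' := by
        rcases Sym2.eq_iff.1 hpe with ⟨h1, h2⟩ | ⟨h1, h2⟩
        · exact K4_unique hG hs4 hs4' hDs hxs (h1 ▸ hMs') (h2 ▸ hD's) (Ne.symm hxD)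
        · exact K4_unique hG hs4 hs4' hDs hxs (h2 ▸ hD's) (h1 ▸ hMs') (Ne.symm hxD)
      subst hss'
      have hDD' : D = D' := le_antisymm (hD'max D hDs) (hDmax D' hD's)
      rcases Sym2.eq_iff.1 hpe with ⟨h1, h2⟩ | ⟨h1, h2⟩
      · exact absurd (hDD'.trans h2).symm hxD
      · have hts' : t = s.erase D' := by
          apply Finset.eq_of_subset_of_card_le
          · intro z hz
            exact Finset.mem_erase.2 ⟨fun hzD => hD't (hzD ▸ hz), hts hz⟩
          · rw [Finset.card_erase_of_mem hD's, hs4'.2, ht.2]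
        intro z hz
        rw [hDD', ← hts'] at hz
        rw [← h1]
        exact hMmax z hz
    · rw [hpe'] at hpe
      have hxs' : x' ∈ s' := hts hxt
      have hys' : y' ∈ s' := hts hyt
      have hss' : s = s' := by
        rcases Sym2.eq_iff.1 hpe with ⟨h1, h2⟩ | ⟨h1, h2⟩
        · exact K4_unique hG hs4 hs4' hDs hxs (h1 ▸ hxs') (h2 ▸ hys') (Ne.symm hxD)
        · exact K4_unique hG hs4 hs4' hDs hxs (h2 ▸ hys') (h1 ▸ hxs') (Ne.symm hxD)
      subst hss'
      have hDD' : D = D' := le_antisymm (hD'max D hDs) (hDmax D' hD's)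
      rcases Sym2.eq_iff.1 hpe with ⟨h1, h2⟩ | ⟨h1, h2⟩
      · exact absurd (h1.trans hDD') hxD'
      · exact absurd (h2.trans hDD') hyD'

lemma pendant_eq (hG : C5Free G) {s : Finset V} (hs4 : G.IsNClique 4 s) {D x x' : V}
    (hDs : D ∈ s) (hDmax : ∀ z ∈ s, z ≤ D) (hxs : x ∈ s) (hxD : x ≠ D)
    (hx's : x' ∈ s) (hx'D : x' ≠ D)
    (h : (HG G).Adj D x) (h' : (HG G).Adj D x') : x = x' := by
  have h1 := pendant_le hG hs4 hDs hDmax hxs hxD h x' (Finset.mem_erase.2 ⟨hx'D, hx's⟩)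
  have h2 := pendant_le hG hs4 hDs hDmax hx's hx'D h' x (Finset.mem_erase.2 ⟨hxD, hxs⟩)
  exact le_antisymm h2 h1

end Graph


section Main
variable [Nonempty V]

lemma pair_eq_erase {t : Finset V} (ht : G.IsNClique 3 t) {D x y : V} (hDt : D ∈ t)
    (hxt : x ∈ t) (hyt : y ∈ t) (hxy : x ≠ y) (hxD : x ≠ D) (hyD : y ≠ D) :
    t.erase D = {x, y} := by
  symm
  apply Finset.eq_of_subset_of_card_le
  · intro z hz
    simp only [Finset.mem_insert, Finset.mem_singleton] at hz
    rcases hz with rfl | rfl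
    · exact Finset.mem_erase.2 ⟨hxD, hxt⟩
    · exact Finset.mem_erase.2 ⟨hyD, hyt⟩
  · rw [Finset.card_erase_of_mem hDt, ht.2,
      Finset.card_insert_of_notMem (by simp [hxy]), Finset.card_singleton]

lemma pickEdge_injOn (hG : C5Free G) :
    Set.InjOn (pickEdge G) {t : Finset V | G.IsNClique 3 t} := by
  intro t ht t' ht' hpe
  simp only [Set.mem_setOf_eq] at ht ht'
  rcases pickEdge_cases hG ht with ⟨x, y, hxt, hyt, hadj, hnm, hpe1⟩ |
    ⟨s, D, hs4, hts, hDs, hDmax, hbr⟩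
  · rcases pickEdge_cases hG ht' with ⟨x', y', hxt', hyt', hadj', hnm', hpe1'⟩ |
      ⟨s', D', hs4', hts', hD's, hD'max, hbr'⟩
    · have hxy : s(x, y) = s(x', y') := by rw [← hpe1, hpe, hpe1']
      have hmem : x ∈ t' ∧ y ∈ t' := by
        rcases Sym2.eq_iff.1 hxy with ⟨h1, h2⟩ | ⟨h1, h2⟩
        · exact ⟨h1 ▸ hxt', h2 ▸ hyt'⟩
        · exact ⟨by rw [h1]; exact hyt', by rw [h2]; exact hxt'⟩
      obtain ⟨z, hz1, hz2, hteq⟩ := third_vertex ht hxt hyt hadj.ne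
      obtain ⟨z', hz1', hz2', hteq'⟩ := third_vertex ht' hmem.1 hmem.2 hadj.ne
      rcases eq_or_ne z z' with rfl | hzz
      · rw [hteq, hteq']
      · exact absurd ⟨z, z', hzz, hz1.symm, hz2.symm, hz1'.symm, hz2'.symm⟩ hnm
    · exfalso
      have hend : ∃ p q, p ≠ q ∧ p ∈ s' ∧ q ∈ s' ∧ pickEdge G t' = s(p, q) := by
        rcases hbr' with ⟨hD't, M, hMt, _, hpe2⟩ | ⟨hD't, p, q, hpt, hqt, hpq, _, _, hpe2⟩
        · exact ⟨M, D', fun h => hD't (h ▸ hMt), hts' hMt, hD's, hpe2⟩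
        · exact ⟨p, q, hpq, hts' hpt, hts' hqt, hpe2⟩
      obtain ⟨p, q, hpq, hps, hqs, hpe2⟩ := hend
      have hxy : s(x, y) = s(p, q) := by rw [← hpe1, hpe, hpe2]
      have : Multi G x y := by
        rcases Sym2.eq_iff.1 hxy with ⟨h1, h2⟩ | ⟨h1, h2⟩
        · exact multi_of_K4 hs4' (h1 ▸ hps) (h2 ▸ hqs) hadj.ne
        · exact multi_of_K4 hs4' (by rw [h1]; exact hqs) (by rw [h2]; exact hps) hadj.ne
      exact hnm this
  · rcases pickEdge_cases hG ht' with ⟨x', y', hxt', hyt', hadj', hnm', hpe1'⟩ |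
      ⟨s', D', hs4', hts', hD's, hD'max, hbr'⟩
    · exfalso
      have hend : ∃ p q, p ≠ q ∧ p ∈ s ∧ q ∈ s ∧ pickEdge G t = s(p, q) := by
        rcases hbr with ⟨hDt, M, hMt, _, hpe2⟩ | ⟨hDt, p, q, hpt, hqt, hpq, _, _, hpe2⟩
        · exact ⟨M, D, fun h => hDt (h ▸ hMt), hts hMt, hDs, hpe2⟩
        · exact ⟨p, q, hpq, hts hpt, hts hqt, hpe2⟩
      obtain ⟨p, q, hpq, hps, hqs, hpe2⟩ := hend
      have hxy : s(x', y') = s(p, q) := by rw [← hpe1', ← hpe, hpe2]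
      have : Multi G x' y' := by
        rcases Sym2.eq_iff.1 hxy with ⟨h1, h2⟩ | ⟨h1, h2⟩
        · exact multi_of_K4 hs4 (h1 ▸ hps) (h2 ▸ hqs) hadj'.ne
        · exact multi_of_K4 hs4 (by rw [h1]; exact hqs) (by rw [h2]; exact hps) hadj'.ne
      exact hnm' this
    · -- both right
      have hend : ∃ p q, p ≠ q ∧ p ∈ s ∧ q ∈ s ∧ pickEdge G t = s(p, q) := by
        rcases hbr with ⟨hDt, M, hMt, _, hpe2⟩ | ⟨hDt, p, q, hpt, hqt, hpq, _, _, hpe2⟩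
        · exact ⟨M, D, fun h => hDt (h ▸ hMt), hts hMt, hDs, hpe2⟩
        · exact ⟨p, q, hpq, hts hpt, hts hqt, hpe2⟩
      obtain ⟨p, q, hpq, hps, hqs, hpe2⟩ := hend
      have hps' : p ∈ s' ∧ q ∈ s' := by
        have hend' : ∃ p' q', p' ≠ q' ∧ p' ∈ s' ∧ q' ∈ s' ∧ pickEdge G t' = s(p', q') := by
          rcases hbr' with ⟨hD't, M, hMt, _, hpe3⟩ | ⟨hD't, p', q', hpt, hqt, hpq', _, _, hpe3⟩
          · exact ⟨M, D', fun h => hD't (h ▸ hMt), hts' hMt, hD's, hpe3⟩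
          · exact ⟨p', q', hpq', hts' hpt, hts' hqt, hpe3⟩
        obtain ⟨p', q', hpq', hps', hqs', hpe3⟩ := hend'
        have hxy : s(p, q) = s(p', q') := by rw [← hpe2, hpe, hpe3]
        rcases Sym2.eq_iff.1 hxy with ⟨h1, h2⟩ | ⟨h1, h2⟩
        · exact ⟨h1 ▸ hps', h2 ▸ hqs'⟩
        · exact ⟨by rw [h1]; exact hqs', by rw [h2]; exact hps'⟩
      have hss' : s = s' := K4_unique hG hs4 hs4' hps hqs hps'.1 hps'.2 hpq
      subst hss'
      have hDD' : D = D' := le_antisymm (hD'max D hDs) (hDmax D' hD's)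
      subst hDD'
      have herase : ∀ {u : Finset V}, G.IsNClique 3 u → u ⊆ s → D ∉ u → u = s.erase D := by
        intro u hu hus hDu
        apply Finset.eq_of_subset_of_card_le
        · intro z hz
          exact Finset.mem_erase.2 ⟨fun hzD => hDu (hzD ▸ hz), hus hz⟩
        · rw [Finset.card_erase_of_mem hDs, hs4.2, hu.2]
      rcases hbr with ⟨hDt, M1, hM1t, _, hpe3⟩ | ⟨hDt, x1, y1, hx1, hy1, hxy1, hx1D, hy1D, hpe3⟩
      · rcases hbr' with ⟨hD't, _, _, _, _⟩ | ⟨hD't, x2, y2, hx2, hy2, hxy2, hx2D, hy2D, hpe4⟩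
        · rw [herase ht hts hDt, herase ht' hts' hD't]
        · exfalso
          have hxy : s(M1, D) = s(x2, y2) := by rw [← hpe3, hpe, hpe4]
          rcases Sym2.eq_iff.1 hxy with ⟨h1, h2⟩ | ⟨h1, h2⟩
          · exact hy2D h2.symm
          · exact hx2D h2.symm
      · rcases hbr' with ⟨hD't, M2, hM2t, _, hpe4⟩ | ⟨hD't, x2, y2, hx2, hy2, hxy2, hx2D, hy2D, hpe4⟩
        · exfalso
          have hxy : s(x1, y1) = s(M2, D) := by rw [← hpe3, hpe, hpe4]
          rcases Sym2.eq_iff.1 hxy with ⟨h1, h2⟩ | ⟨h1, h2⟩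
          · exact hy1D h2
          · exact hx1D h1
        · have e1 : t.erase D = {x1, y1} := pair_eq_erase ht hDt hx1 hy1 hxy1 hx1D hy1D
          have e2 : t'.erase D = {x2, y2} := pair_eq_erase ht' hD't hx2 hy2 hxy2 hx2D hy2D
          have hxy : s(x1, y1) = s(x2, y2) := by rw [← hpe3, hpe, hpe4]
          have e3 : ({x1, y1} : Finset V) = {x2, y2} := by
            rcases Sym2.eq_iff.1 hxy with ⟨h1, h2⟩ | ⟨h1, h2⟩
            · rw [h1, h2]
            · rw [h1, h2]; ext u; simp; tauto
          have : t.erase D = t'.erase D := by rw [e1, e3, ← e2]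
          calc t = insert D (t.erase D) := (Finset.insert_erase hDt).symm
            _ = insert D (t'.erase D) := by rw [this]
            _ = t' := Finset.insert_erase hD't

lemma cycle4_destruct {H : SimpleGraph V} {v : V} (w : H.Walk v v) (hc : w.IsCycle)
    (h4 : w.length = 4) :
    ∃ a b c d : V, H.Adj a b ∧ H.Adj b c ∧ H.Adj c d ∧ H.Adj d a ∧
      a ≠ b ∧ a ≠ c ∧ a ≠ d ∧ b ≠ c ∧ b ≠ d ∧ c ≠ d := by
  cases w with
  | nil => simp at h4
  | cons h1 p =>
    cases p with
    | nil => simp at h4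
    | cons h2 p =>
      cases p with
      | nil => simp at h4
      | cons h3 p =>
        cases p with
        | nil => simp at h4
        | cons h4' p =>
          cases p with
          | cons h5 p => simp [SimpleGraph.Walk.length_cons] at h4
          | nil =>
            rw [Walk.isCycle_def] at hc
            obtain ⟨-, -, hnd⟩ := hc
            simp only [Walk.support_cons, Walk.support_nil, List.tail_cons, List.nodup_cons,
              List.mem_cons, List.not_mem_nil, or_false, List.nodup_nil, and_true] at hnd
            push_neg at hnd
            obtain ⟨⟨hbc, hbd, hbv⟩, ⟨hcd, hcv⟩, hdv, -⟩ := hnd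
            exact ⟨v, _, _, _, h1, h2, h3, h4', h1.ne, Ne.symm hcv, Ne.symm hdv, hbc, hbd, hcd⟩

lemma endgame (hG : C5Free G) {s : Finset V} (hs4 : G.IsNClique 4 s) {a b c d : V}
    (ha : a ∈ s) (hb : b ∈ s) (hc : c ∈ s) (hd : d ∈ s)
    (hab : (HG G).Adj a b) (hbc : (HG G).Adj b c) (hcd : (HG G).Adj c d) (hda : (HG G).Adj d a)
    (hac : a ≠ c) (hbd : b ≠ d) : False := by
  have hle := HG_le hG
  have hab' : a ≠ b := hab.ne
  have hbc' : b ≠ c := hbc.ne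
  have hcd' : c ≠ d := hcd.ne
  have hda' : d ≠ a := hda.ne
  obtain ⟨D, hDs, hDmax⟩ : ∃ D, D ∈ s ∧ ∀ z ∈ s, z ≤ D :=
    ⟨s.max' ⟨a, ha⟩, Finset.max'_mem _ _, fun z hz => Finset.le_max' _ z hz⟩
  have hseq : s = {a, b, c, d} := by
    symm
    apply Finset.eq_of_subset_of_card_le
    · intro z hz
      simp only [Finset.mem_insert, Finset.mem_singleton] at hz
      rcases hz with rfl | rfl | rfl | rfl <;> assumption
    · rw [hs4.2, Finset.card_insert_of_notMem (by simp [hab', hac, Ne.symm hda']),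
        Finset.card_insert_of_notMem (by simp [hbc', hbd]),
        Finset.card_insert_of_notMem (by simp [hcd']), Finset.card_singleton]
  have hDmem : D = a ∨ D = b ∨ D = c ∨ D = d := by
    have := hDs
    rw [hseq] at this
    simpa using this
  rcases hDmem with rfl | rfl | rfl | rfl
  · exact hbd (pendant_eq hG hs4 hDs hDmax hb (Ne.symm hab') hd hda' hab hda.symm)
  · exact hac (pendant_eq hG hs4 hDs hDmax ha hab' hc (Ne.symm hbc') hab.symm hbc)
  · exact hbd (pendant_eq hG hs4 hDs hDmax hb hbc' hd (Ne.symm hcd') hbc.symm hcd)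
  · exact hac (pendant_eq hG hs4 hDs hDmax ha (Ne.symm hda') hc hcd' hda hcd.symm)

lemma main4 (hG : C5Free G) {a b c d : V}
    (hab : (HG G).Adj a b) (hbc : (HG G).Adj b c) (hcd : (HG G).Adj c d)
    (hda : (HG G).Adj d a) (hac : a ≠ c) (hbd : b ≠ d) (hdiag : G.Adj a c) : False := by
  have hle := HG_le hG
  rcases HG_adj_elim hG hbc with ⟨t2, ht2, hbt2, hct2, hnm2, hpe2⟩ | ⟨s, hs4, hbs, hcs⟩
  · rcases HG_adj_elim hG hab with ⟨t1, ht1, hat1, hbt1, hnm1, hpe1⟩ | ⟨s, hs4, has, hbs⟩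
    · obtain ⟨z, hz1, hz2, hteq1⟩ := third_vertex ht1 hat1 hbt1 hab.ne
      have hzc : z = c := by
        by_contra hzc
        exact hnm1 ⟨z, c, hzc, hz1.symm, hz2.symm, hdiag, hle hbc⟩
      obtain ⟨z', hz1', hz2', hteq2⟩ := third_vertex ht2 hbt2 hct2 hbc.ne
      have hza : z' = a := by
        by_contra hza
        exact hnm2 ⟨z', a, hza, hz1'.symm, hz2'.symm, (hle hab).symm, hdiag.symm⟩
      subst hzc; subst hza
      have ht12 : t1 = t2 := by
        rw [hteq1, hteq2]; ext u; simp; tauto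
      rw [ht12, hpe2] at hpe1
      rcases Sym2.eq_iff.1 hpe1 with ⟨h1, h2⟩ | ⟨h1, h2⟩
      · exact hab.ne h1.symm
      · exact hac h2.symm
    · have hcs : c ∈ s := mem_of_common hG hs4 has hbs hab.ne hdiag.symm (hle hbc).symm
      have hds : d ∈ s := mem_of_common hG hs4 has hcs hac (hle hda) (hle hcd).symm
      exact endgame hG hs4 has hbs hcs hds hab hbc hcd hda hac hbd
  · have has : a ∈ s := mem_of_common hG hs4 hbs hcs hbc.ne (hle hab) hdiag
    have hds : d ∈ s := mem_of_common hG hs4 has hcs hac (hle hda) (hle hcd).symm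
    exact endgame hG hs4 has hbs hcs hds hab hbc hcd hda hac hbd

lemma HG_c4free (hG : C5Free G) : C4Free (HG G) := by
  intro v w hcyc hlen
  obtain ⟨a, b, c, d, hab, hbc, hcd, hda, hab', hac, had, hbc', hbd, hcd'⟩ :=
    cycle4_destruct w hcyc hlen
  have hle := HG_le hG
  obtain ⟨z, hza, hzb⟩ := HG_common hG hab
  rcases eq_or_ne z c with rfl | hzc
  · exact main4 hG hab hbc hcd hda hac hbd hza
  rcases eq_or_ne z d with rfl | hzd
  · exact main4 hG hbc hcd hda hab hbd (Ne.symm hac) hzb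
  · exact c5false hG hza.symm (hle hda).symm (hle hcd).symm (hle hbc).symm hzb
      hzd hzc hac hab.ne (Ne.symm hbd)

lemma helper (G : SimpleGraph V) (hG : C5Free G) :
    ∃ H : SimpleGraph V, H ≤ G ∧ C4Free H ∧ C5Free H ∧
      H.edgeSet.ncard = {t : Finset V | G.IsNClique 3 t}.ncard := by
  have hc5 : C5Free (HG G) := by
    intro v w hcyc hlen
    refine hG v (w.mapLe (HG_le hG)) (hcyc.mapLe (HG_le hG)) ?_
    rw [show (w.mapLe (HG_le hG)).length = w.length from by simp [Walk.mapLe]]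
    exact hlen
  refine ⟨HG G, HG_le hG, HG_c4free hG, hc5, ?_⟩
  have hE : (HG G).edgeSet = pickEdge G '' {t : Finset V | G.IsNClique 3 t} := by
    rw [HG, edgeSet_fromEdgeSet]
    rw [sdiff_eq_self_iff_disjoint, Set.disjoint_left]
    rintro e hdiag ⟨t, ht, rfl⟩
    obtain ⟨x, y, hadj, hpe⟩ := pickEdge_adj hG ht
    rw [hpe] at hdiag
    exact absurd (Sym2.mk_isDiag_iff.1 hdiag) hadj.ne
  rw [hE, Set.ncard_image_of_injOn (pickEdge_injOn hG)]

end Main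

end Lin

end C45Aux

theorem exists_C4C5_free_subgraph_with_edges_eq_triangles
    {V : Type*} [Fintype V] (G : SimpleGraph V) (hG : C5Free G) :
    ∃ H : SimpleGraph V, H ≤ G ∧ C4Free H ∧ C5Free H ∧
      H.edgeSet.ncard = {t : Finset V | G.IsNClique 3 t}.ncard := by
  classical
  cases isEmpty_or_nonempty V with
  | inl hV =>
    refine ⟨⊥, bot_le, fun v => (IsEmpty.false v).elim, fun v => (IsEmpty.false v).elim, ?_⟩
    have hT : {t : Finset V | G.IsNClique 3 t} = ∅ := by
      ext t
      simp only [Set.mem_setOf_eq, Set.mem_empty_iff_false, iff_false]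
      intro ht
      obtain ⟨x, -⟩ := Finset.card_pos.1 (show 0 < t.card by rw [ht.2]; norm_num)
      exact (IsEmpty.false x).elim
    rw [SimpleGraph.edgeSet_bot, hT]
    simp [Set.ncard_empty]
  | inr hV =>
    letI : LinearOrder V :=
      LinearOrder.lift' (Fintype.equivFin V) (Fintype.equivFin V).injective
    exact C45Aux.helper G hG
end

section
/- Let G be a simple graph that contains no cycle of length 5 as a subgraph and in which every edge is contained in at least one triangle. Then every block of G is either a crown-block or a K4-block; that is, for every block B, either all triangles in B contain a common edge ab (crown-block), or B consists exactly of the four triangles of a complete graph K4 on four vertices of G (K4-block). -/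
set_option linter.unusedSectionVars false
set_option maxHeartbeats 1000000

/-- Two triangles of `G` lie in the same block if they are connected by a chain of
triangles of `G` in which any two consecutive triangles share two vertices (an edge). -/
def SameBlock {V : Type*} [DecidableEq V] (G : SimpleGraph V) (T T' : Finset V) : Prop :=
  Relation.ReflTransGen
    (fun A B => G.IsNClique 3 A ∧ G.IsNClique 3 B ∧ 2 ≤ (A ∩ B).card) T T'

section helpers
variable {V : Type*} [DecidableEq V] {G : SimpleGraph V}

lemma tri_adj {B : Finset V} (h : G.IsNClique 3 B) {x y : V} (hx : x ∈ B) (hy : y ∈ B)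
    (hxy : x ≠ y) : G.Adj x y := h.1 hx hy hxy

lemma two_of_three {p q r : V} {B : Finset V}
    (h : 2 ≤ ((({p, q, r}) : Finset V) ∩ B).card) :
    (p ∈ B ∧ q ∈ B) ∨ (p ∈ B ∧ r ∈ B) ∨ (q ∈ B ∧ r ∈ B) := by
  obtain ⟨x, hx, y, hy, hxy⟩ := Finset.one_lt_card.mp h
  simp only [Finset.mem_inter, Finset.mem_insert, Finset.mem_singleton] at hx hy
  obtain ⟨hx1, hx2⟩ := hx
  obtain ⟨hy1, hy2⟩ := hy
  rcases hx1 with rfl | rfl | rfl <;> rcases hy1 with rfl | rfl | rfl <;>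
    first
    | exact absurd rfl hxy
    | tauto

lemma third_elem {B : Finset V} (hB : B.card = 3) {p q : V} (hp : p ∈ B) (hq : q ∈ B)
    (hpq : p ≠ q) : ∃ w, w ≠ p ∧ w ≠ q ∧ B = {p, q, w} := by
  have hsub : ({p, q} : Finset V) ⊆ B := by
    intro z hz; simp only [Finset.mem_insert, Finset.mem_singleton] at hz
    rcases hz with rfl | rfl <;> assumption
  have h2 : ({p, q} : Finset V).card = 2 := Finset.card_pair hpq
  have h1 : (B \ {p, q}).card = 1 := by rw [Finset.card_sdiff_of_subset hsub, hB, h2]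
  obtain ⟨w, hw⟩ := Finset.card_eq_one.mp h1
  have hwm : w ∈ B \ {p, q} := hw ▸ Finset.mem_singleton_self w
  simp only [Finset.mem_sdiff, Finset.mem_insert, Finset.mem_singleton] at hwm
  push_neg at hwm
  refine ⟨w, hwm.2.1, hwm.2.2, ?_⟩
  have hu : B = {p, q} ∪ (B \ {p, q}) := (Finset.union_sdiff_of_subset hsub).symm
  rw [hu, hw]
  ext z
  simp only [Finset.mem_union, Finset.mem_insert, Finset.mem_singleton]
  tauto

lemma sub3_of_K4 {a b c d : V} (hab : a ≠ b) (hac : a ≠ c) (had : a ≠ d)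
    (hbc : b ≠ c) (hbd : b ≠ d) (hcd : c ≠ d) {B : Finset V}
    (hsub : B ⊆ {a, b, c, d}) (hcard : B.card = 3) :
    B = {a, b, c} ∨ B = {a, b, d} ∨ B = {a, c, d} ∨ B = {b, c, d} := by
  have h4 : ({a, b, c, d} : Finset V).card = 4 := by
    rw [Finset.card_insert_of_notMem (by simp [hab, hac, had]),
      Finset.card_insert_of_notMem (by simp [hbc, hbd]),
      Finset.card_insert_of_notMem (by simp [hcd]), Finset.card_singleton]
  have h1 : (({a, b, c, d} : Finset V) \ B).card = 1 := by
    rw [Finset.card_sdiff_of_subset hsub, h4, hcard]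
  obtain ⟨t, ht⟩ := Finset.card_eq_one.mp h1
  have hBeq : B = ({a, b, c, d} : Finset V) \ {t} := by
    rw [← ht, Finset.sdiff_sdiff_eq_self hsub]
  have htm : t ∈ ({a, b, c, d} : Finset V) :=
    Finset.sdiff_subset (ht ▸ Finset.mem_singleton_self t)
  simp only [Finset.mem_insert, Finset.mem_singleton] at htm
  have key : ∀ z, z ∈ B ↔ (z = a ∨ z = b ∨ z = c ∨ z = d) ∧ z ≠ t := by
    intro z
    rw [hBeq]
    simp [Finset.mem_sdiff]
  rcases htm with rfl | rfl | rfl | rfl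
  · refine Or.inr (Or.inr (Or.inr ?_))
    ext z; rw [key z]; simp only [Finset.mem_insert, Finset.mem_singleton]
    constructor
    · rintro ⟨rfl | rfl | rfl | rfl, h2⟩ <;> tauto
    · rintro (rfl | rfl | rfl) <;> exact ⟨by tauto, by intro h; subst h; tauto⟩
  · refine Or.inr (Or.inr (Or.inl ?_))
    ext z; rw [key z]; simp only [Finset.mem_insert, Finset.mem_singleton]
    constructor
    · rintro ⟨rfl | rfl | rfl | rfl, h2⟩ <;> tauto
    · rintro (rfl | rfl | rfl) <;> exact ⟨by tauto, by intro h; subst h; tauto⟩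
  · refine Or.inr (Or.inl ?_)
    ext z; rw [key z]; simp only [Finset.mem_insert, Finset.mem_singleton]
    constructor
    · rintro ⟨rfl | rfl | rfl | rfl, h2⟩ <;> tauto
    · rintro (rfl | rfl | rfl) <;> exact ⟨by tauto, by intro h; subst h; tauto⟩
  · refine Or.inl ?_
    ext z; rw [key z]; simp only [Finset.mem_insert, Finset.mem_singleton]
    constructor
    · rintro ⟨rfl | rfl | rfl | rfl, h2⟩ <;> tauto
    · rintro (rfl | rfl | rfl) <;> exact ⟨by tauto, by intro h; subst h; tauto⟩

lemma c5F (hC5 : C5Free G) {v1 v2 v3 v4 v5 : V}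
    (h12 : G.Adj v1 v2) (h23 : G.Adj v2 v3) (h34 : G.Adj v3 v4) (h45 : G.Adj v4 v5)
    (h51 : G.Adj v5 v1)
    (h13 : v1 ≠ v3) (h14 : v1 ≠ v4) (h24 : v2 ≠ v4) (h25 : v2 ≠ v5) (h35 : v3 ≠ v5) : False := by
  have h21 := h12.ne'
  have h32 := h23.ne'
  have h43 := h34.ne'
  have h54 := h45.ne'
  have h15 := h51.ne'
  refine hC5 v1 (.cons h12 (.cons h23 (.cons h34 (.cons h45 (.cons h51 .nil))))) ?_ rfl
  simp [SimpleGraph.Walk.isCycle_def, SimpleGraph.Walk.isTrail_def, List.Nodup, Sym2.eq,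
    Sym2.rel_iff', h12.ne, h23.ne, h34.ne, h45.ne, h51.ne, h13, h14, h24, h25, h35,
    h21, h32, h43, h54, h15, h13.symm, h14.symm, h24.symm, h25.symm, h35.symm, and_assoc]

/-- `w` attached to edge `ab` of a `K4` `abcd`, `w` outside: gives a `C5`. -/
lemma k4_ear1 (hC5 : C5Free G) {a b c d w : V}
    (hab : G.Adj a b) (hac : G.Adj a c) (had : G.Adj a d)
    (hbc : G.Adj b c) (hbd : G.Adj b d) (hcd : G.Adj c d)
    (haw : G.Adj a w) (hbw : G.Adj b w) (hwc : w ≠ c) (hwd : w ≠ d) : False :=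
  c5F hC5 haw.symm hac hcd hbd.symm hbw hwc hwd had.ne hab.ne hbc.ne'

lemma k4_no_ear (hC5 : C5Free G) {a b c d w p q : V}
    (hab : G.Adj a b) (hac : G.Adj a c) (had : G.Adj a d)
    (hbc : G.Adj b c) (hbd : G.Adj b d) (hcd : G.Adj c d)
    (hpw : G.Adj p w) (hqw : G.Adj q w) (hpq : p ≠ q)
    (hp : p = a ∨ p = b ∨ p = c ∨ p = d) (hq : q = a ∨ q = b ∨ q = c ∨ q = d)
    (hwa : w ≠ a) (hwb : w ≠ b) (hwc : w ≠ c) (hwd : w ≠ d) : False := by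
  rcases hp with rfl | rfl | rfl | rfl <;> rcases hq with rfl | rfl | rfl | rfl
  · exact hpq rfl
  · exact k4_ear1 hC5 hab hac had hbc hbd hcd hpw hqw hwc hwd
  · exact k4_ear1 hC5 hac hab had hbc.symm hcd hbd hpw hqw hwb hwd
  · exact k4_ear1 hC5 had hab hac hbd.symm hcd.symm hbc hpw hqw hwb hwc
  · exact k4_ear1 hC5 hab.symm hbc hbd hac had hcd hpw hqw hwc hwd
  · exact hpq rfl
  · exact k4_ear1 hC5 hbc hab.symm hbd hac.symm hcd had hpw hqw hwa hwd
  · exact k4_ear1 hC5 hbd hab.symm hbc had.symm hcd.symm hac hpw hqw hwa hwc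
  · exact k4_ear1 hC5 hac.symm hbc.symm hcd hab had hbd hpw hqw hwb hwd
  · exact k4_ear1 hC5 hbc.symm hac.symm hcd hab.symm hbd had hpw hqw hwa hwd
  · exact hpq rfl
  · exact k4_ear1 hC5 hcd hac.symm hbc.symm had.symm hbd.symm hab hpw hqw hwa hwb
  · exact k4_ear1 hC5 had.symm hbd.symm hcd.symm hab hac hbc hpw hqw hwb hwc
  · exact k4_ear1 hC5 hbd.symm had.symm hcd.symm hab.symm hbc hac hpw hqw hwa hwc
  · exact k4_ear1 hC5 hcd.symm had.symm hbd.symm hac.symm hbc.symm hab hpw hqw hwa hwb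
  · exact hpq rfl

lemma crown (hC5 : C5Free G) {a b c d : V}
    (hab : G.Adj a b) (hac : G.Adj a c) (hbc : G.Adj b c)
    (had : G.Adj a d) (hbd : G.Adj b d) (hcd : c ≠ d)
    (hnoK4 : ∀ e, G.Adj a e → G.Adj b e → G.Adj c e → False) :
    ∀ T' : Finset V,
      Relation.ReflTransGen
        (fun A B => G.IsNClique 3 A ∧ G.IsNClique 3 B ∧ 2 ≤ (A ∩ B).card) {a, b, c} T' →
      G.IsNClique 3 T' ∧ a ∈ T' ∧ b ∈ T' := by
  intro T' h
  induction h with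
  | refl =>
      exact ⟨SimpleGraph.is3Clique_triple_iff.mpr ⟨hab, hac, hbc⟩, by simp, by simp⟩
  | @tail A B hpre hr ih =>
      obtain ⟨hA3, haA, hbA⟩ := ih
      obtain ⟨hAtri, hBtri, hc2⟩ := hr
      obtain ⟨x, hxa, hxb, hAeq⟩ := third_elem hA3.2 haA hbA hab.ne
      rw [hAeq] at hA3 hc2
      have hax : G.Adj a x := tri_adj hA3 (by simp) (by simp) (Ne.symm hxa)
      have hbx : G.Adj b x := tri_adj hA3 (by simp) (by simp) (Ne.symm hxb)
      obtain ⟨y, hyx, hay, hby⟩ : ∃ y, y ≠ x ∧ G.Adj a y ∧ G.Adj b y := by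
        by_cases hxc : x = c
        · exact ⟨d, by rw [hxc]; exact Ne.symm hcd, had, hbd⟩
        · exact ⟨c, fun h' => hxc h'.symm, hac, hbc⟩
      rcases two_of_three hc2 with ⟨haB, hbB⟩ | ⟨haB, hxB⟩ | ⟨hbB, hxB⟩
      · exact ⟨hBtri, haB, hbB⟩
      · by_cases hbB : b ∈ B
        · exact ⟨hBtri, haB, hbB⟩
        · exfalso
          obtain ⟨w, hwa, hwx, hBeq⟩ := third_elem hBtri.2 haB hxB (Ne.symm hxa)
          have hwB : w ∈ B := by rw [hBeq]; simp
          have hwb : w ≠ b := fun h' => hbB (h' ▸ hwB)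
          have haw : G.Adj a w := tri_adj hBtri haB hwB (Ne.symm hwa)
          have hxw : G.Adj x w := tri_adj hBtri hxB hwB (Ne.symm hwx)
          by_cases hwy : w = y
          · subst hwy
            by_cases hcx : c = x
            · exact hnoK4 w hay hby (by rw [hcx]; exact hxw)
            · by_cases hcy : c = w
              · exact hnoK4 x hax hbx (by rw [hcy]; exact hxw.symm)
              · exact c5F hC5 hac.symm hax hxw hby.symm hbc hcx hcy hay.ne hab.ne hxb
          · exact c5F hC5 hxw.symm hbx.symm hby hay.symm haw hwb hwy (Ne.symm hyx) hxa hab.ne'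
      · by_cases haB : a ∈ B
        · exact ⟨hBtri, haB, hbB⟩
        · exfalso
          obtain ⟨w, hwb, hwx, hBeq⟩ := third_elem hBtri.2 hbB hxB (Ne.symm hxb)
          have hwB : w ∈ B := by rw [hBeq]; simp
          have hwa : w ≠ a := fun h' => haB (h' ▸ hwB)
          have hbw : G.Adj b w := tri_adj hBtri hbB hwB (Ne.symm hwb)
          have hxw : G.Adj x w := tri_adj hBtri hxB hwB (Ne.symm hwx)
          by_cases hwy : w = y
          · subst hwy
            by_cases hcx : c = x
            · exact hnoK4 w hay hby (by rw [hcx]; exact hxw)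
            · by_cases hcy : c = w
              · exact hnoK4 x hax hbx (by rw [hcy]; exact hxw.symm)
              · exact c5F hC5 hac.symm hax hxw hby.symm hbc hcx hcy hay.ne hab.ne hxb
          · exact c5F hC5 hxw.symm hax.symm hay hby.symm hbw hwa hwy (Ne.symm hyx) hxb hab.ne

lemma k4_block (hC5 : C5Free G) {a b c d : V}
    (hab : G.Adj a b) (hac : G.Adj a c) (had : G.Adj a d)
    (hbc : G.Adj b c) (hbd : G.Adj b d) (hcd : G.Adj c d) :
    ∀ T' : Finset V,
      Relation.ReflTransGen
        (fun A B => G.IsNClique 3 A ∧ G.IsNClique 3 B ∧ 2 ≤ (A ∩ B).card) {a, b, c} T' →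
      T' = {a, b, c} ∨ T' = {a, b, d} ∨ T' = {a, c, d} ∨ T' = {b, c, d} := by
  intro T' h
  induction h with
  | refl => exact Or.inl rfl
  | @tail A B hpre hr ih =>
      obtain ⟨hAtri, hBtri, hc2⟩ := hr
      have hAsub : ∀ z, z ∈ A → z = a ∨ z = b ∨ z = c ∨ z = d := by
        rcases ih with rfl | rfl | rfl | rfl <;>
          · intro z hz
            simp only [Finset.mem_insert, Finset.mem_singleton] at hz
            tauto
      obtain ⟨p, hpm, q, hqm, hpq⟩ := Finset.one_lt_card.mp hc2
      rw [Finset.mem_inter] at hpm hqm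
      have hp4 := hAsub p hpm.1
      have hq4 := hAsub q hqm.1
      obtain ⟨w, hwp, hwq, hBeq⟩ := third_elem hBtri.2 hpm.2 hqm.2 hpq
      have hwB : w ∈ B := by rw [hBeq]; simp
      by_cases hw4 : w = a ∨ w = b ∨ w = c ∨ w = d
      · refine sub3_of_K4 hab.ne hac.ne had.ne hbc.ne hbd.ne hcd.ne ?_ hBtri.2
        rw [hBeq]
        intro z hz
        simp only [Finset.mem_insert, Finset.mem_singleton] at hz ⊢
        rcases hz with rfl | rfl | rfl <;> tauto
      · push_neg at hw4
        exact absurd (k4_no_ear hC5 hab hac had hbc hbd hcd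
          (tri_adj hBtri hpm.2 hwB (Ne.symm hwp)) (tri_adj hBtri hqm.2 hwB (Ne.symm hwq))
          hpq hp4 hq4 hw4.1 hw4.2.1 hw4.2.2.1 hw4.2.2.2) not_false

end helpers

theorem block_is_crown_or_K4 {V : Type*} [DecidableEq V] (G : SimpleGraph V)
    (hC5 : C5Free G)
    (hEdge : ∀ u v : V, G.Adj u v → ∃ w : V, G.Adj u w ∧ G.Adj v w)
    (T : Finset V) (hT : G.IsNClique 3 T) :
    (∃ a b : V, G.Adj a b ∧
        ∀ T' : Finset V, G.IsNClique 3 T' → SameBlock G T T' → a ∈ T' ∧ b ∈ T') ∨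
    (∃ a b c d : V, G.Adj a b ∧ G.Adj a c ∧ G.Adj a d ∧ G.Adj b c ∧ G.Adj b d ∧ G.Adj c d ∧
        ∀ T' : Finset V, (G.IsNClique 3 T' ∧ SameBlock G T T') ↔
          (T' = {a, b, c} ∨ T' = {a, b, d} ∨ T' = {a, c, d} ∨ T' = {b, c, d})) := by
  obtain ⟨a, b, c, hab, hac, hbc, rfl⟩ := SimpleGraph.is3Clique_iff.mp hT
  by_cases hK4 : ∃ e, G.Adj a e ∧ G.Adj b e ∧ G.Adj c e
  · obtain ⟨d, had, hbd, hcd⟩ := hK4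
    right
    have tabc : G.IsNClique 3 ({a, b, c} : Finset V) :=
      SimpleGraph.is3Clique_triple_iff.mpr ⟨hab, hac, hbc⟩
    have tabd : G.IsNClique 3 ({a, b, d} : Finset V) :=
      SimpleGraph.is3Clique_triple_iff.mpr ⟨hab, had, hbd⟩
    have tacd : G.IsNClique 3 ({a, c, d} : Finset V) :=
      SimpleGraph.is3Clique_triple_iff.mpr ⟨hac, had, hcd⟩
    have tbcd : G.IsNClique 3 ({b, c, d} : Finset V) :=
      SimpleGraph.is3Clique_triple_iff.mpr ⟨hbc, hbd, hcd⟩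
    refine ⟨a, b, c, d, hab, hac, had, hbc, hbd, hcd, fun T' =>
      ⟨fun h => k4_block hC5 hab hac had hbc hbd hcd T' h.2, ?_⟩⟩
    rintro (rfl | rfl | rfl | rfl)
    · exact ⟨tabc, Relation.ReflTransGen.refl⟩
    · refine ⟨tabd, Relation.ReflTransGen.single ⟨tabc, tabd, ?_⟩⟩
      have hs : ({a, b} : Finset V) ⊆ ({a, b, c} : Finset V) ∩ {a, b, d} := by
        intro z hz
        simp only [Finset.mem_insert, Finset.mem_singleton] at hz
        simp only [Finset.mem_inter, Finset.mem_insert, Finset.mem_singleton]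
        tauto
      calc 2 = ({a, b} : Finset V).card := (Finset.card_pair hab.ne).symm
        _ ≤ _ := Finset.card_le_card hs
    · refine ⟨tacd, Relation.ReflTransGen.single ⟨tabc, tacd, ?_⟩⟩
      have hs : ({a, c} : Finset V) ⊆ ({a, b, c} : Finset V) ∩ {a, c, d} := by
        intro z hz
        simp only [Finset.mem_insert, Finset.mem_singleton] at hz
        simp only [Finset.mem_inter, Finset.mem_insert, Finset.mem_singleton]
        tauto
      calc 2 = ({a, c} : Finset V).card := (Finset.card_pair hac.ne).symm
        _ ≤ _ := Finset.card_le_card hs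
    · refine ⟨tbcd, Relation.ReflTransGen.single ⟨tabc, tbcd, ?_⟩⟩
      have hs : ({b, c} : Finset V) ⊆ ({a, b, c} : Finset V) ∩ {b, c, d} := by
        intro z hz
        simp only [Finset.mem_insert, Finset.mem_singleton] at hz
        simp only [Finset.mem_inter, Finset.mem_insert, Finset.mem_singleton]
        tauto
      calc 2 = ({b, c} : Finset V).card := (Finset.card_pair hbc.ne).symm
        _ ≤ _ := Finset.card_le_card hs
  · have hnoK4 : ∀ e, G.Adj a e → G.Adj b e → G.Adj c e → False :=
      fun e h1 h2 h3 => hK4 ⟨e, h1, h2, h3⟩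
    left
    by_cases h1 : ∃ e, e ≠ c ∧ G.Adj a e ∧ G.Adj b e
    · obtain ⟨d, hdc, had, hbd⟩ := h1
      exact ⟨a, b, hab, fun T' _ hblk =>
        (crown hC5 hab hac hbc had hbd (Ne.symm hdc) hnoK4 T' hblk).2⟩
    · by_cases h2 : ∃ e, e ≠ b ∧ G.Adj a e ∧ G.Adj c e
      · obtain ⟨d, hdb, had, hcd⟩ := h2
        refine ⟨a, c, hac, fun T' _ hblk => ?_⟩
        have heq : ({a, b, c} : Finset V) = ({a, c, b} : Finset V) := by
          ext z
          simp only [Finset.mem_insert, Finset.mem_singleton]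
          tauto
        rw [SameBlock, heq] at hblk
        exact (crown hC5 hac hab hbc.symm had hcd (Ne.symm hdb)
          (fun e ha' hb' hc' => hnoK4 e ha' hc' hb') T' hblk).2
      · by_cases h3 : ∃ e, e ≠ a ∧ G.Adj b e ∧ G.Adj c e
        · obtain ⟨d, hda, hbd, hcd⟩ := h3
          refine ⟨b, c, hbc, fun T' _ hblk => ?_⟩
          have heq : ({a, b, c} : Finset V) = ({b, c, a} : Finset V) := by
            ext z
            simp only [Finset.mem_insert, Finset.mem_singleton]
            tauto
          rw [SameBlock, heq] at hblk
          exact (crown hC5 hbc hab.symm hac.symm hbd hcd (Ne.symm hda)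
            (fun e hb' hc' ha' => hnoK4 e ha' hb' hc') T' hblk).2
        · refine ⟨a, b, hab, fun T' _ hblk => ?_⟩
          have key : T' = {a, b, c} := by
            induction hblk with
            | refl => rfl
            | @tail A B hpre hr ih =>
                obtain ⟨hAtri, hBtri, hc2⟩ := hr
                rw [ih hAtri] at hc2
                rcases two_of_three hc2 with ⟨hxB, hyB⟩ | ⟨hxB, hyB⟩ | ⟨hxB, hyB⟩
                · obtain ⟨w, hw1, hw2, hBeq⟩ := third_elem hBtri.2 hxB hyB hab.ne
                  have hwB : w ∈ B := by rw [hBeq]; simp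
                  by_cases hwc : w = c
                  · rw [hBeq, hwc]
                  · exact absurd ⟨w, hwc, tri_adj hBtri hxB hwB (Ne.symm hw1),
                      tri_adj hBtri hyB hwB (Ne.symm hw2)⟩ h1
                · obtain ⟨w, hw1, hw2, hBeq⟩ := third_elem hBtri.2 hxB hyB hac.ne
                  have hwB : w ∈ B := by rw [hBeq]; simp
                  by_cases hwb : w = b
                  · rw [hBeq, hwb]
                    ext z
                    simp only [Finset.mem_insert, Finset.mem_singleton]
                    tauto
                  · exact absurd ⟨w, hwb, tri_adj hBtri hxB hwB (Ne.symm hw1),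
                      tri_adj hBtri hyB hwB (Ne.symm hw2)⟩ h2
                · obtain ⟨w, hw1, hw2, hBeq⟩ := third_elem hBtri.2 hxB hyB hbc.ne
                  have hwB : w ∈ B := by rw [hBeq]; simp
                  by_cases hwa : w = a
                  · rw [hBeq, hwa]
                    ext z
                    simp only [Finset.mem_insert, Finset.mem_singleton]
                    tauto
                  · exact absurd ⟨w, hwa, tri_adj hBtri hxB hwB (Ne.symm hw1),
                      tri_adj hBtri hyB hwB (Ne.symm hw2)⟩ h3
          rw [key]
          exact ⟨by simp, by simp⟩
end

section
/- Let G be a simple graph that contains no cycle of length 5 as a subgraph and in which every edge is contained in at least one triangle. Then for every cycle x, y, z, w of length 4 in G, all four edges xy, yz, zw, wx are contained in triangles belonging to one single block of G. -/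
open SimpleGraph

lemma c5_exists {V : Type*} (G : SimpleGraph V) (a x w z y : V)
    (h1 : G.Adj a x) (h2 : G.Adj x w) (h3 : G.Adj w z) (h4 : G.Adj z y) (h5 : G.Adj y a)
    (haw : a ≠ w) (haz : a ≠ z) (hay : a ≠ y)
    (hxz : x ≠ z) (hxy : x ≠ y) (hwy : w ≠ y) :
    ∃ (v : V) (c : G.Walk v v), c.IsCycle ∧ c.length = 5 := by
  refine ⟨a, Walk.cons h1 (Walk.cons h2 (Walk.cons h3 (Walk.cons h4 (Walk.cons h5 Walk.nil)))), ?_, rfl⟩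
  refine ⟨⟨?_, by simp⟩, ?_⟩
  · simp [Walk.isTrail_def, Sym2.eq, Sym2.rel_iff']
    aesop
  · simp
    aesop

lemma pair_card_le {V : Type*} [DecidableEq V] {u v : V} {A B : Finset V}
    (huv : u ≠ v) (huA : u ∈ A) (hvA : v ∈ A) (huB : u ∈ B) (hvB : v ∈ B) :
    2 ≤ (A ∩ B).card := by
  have h : ({u, v} : Finset V) ⊆ A ∩ B := by
    intro t ht
    simp only [Finset.mem_insert, Finset.mem_singleton] at ht
    rcases ht with rfl | rfl <;> simp [Finset.mem_inter, *]
  calc 2 = ({u, v} : Finset V).card := (Finset.card_pair huv).symm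
    _ ≤ (A ∩ B).card := Finset.card_le_card h

theorem C4_edges_in_one_block {V : Type*} [DecidableEq V] (G : SimpleGraph V)
    (hC5 : C5Free G)
    (hEdge : ∀ u v : V, G.Adj u v → ∃ w : V, G.Adj u w ∧ G.Adj v w)
    (x y z w : V) (hxz : x ≠ z) (hyw : y ≠ w)
    (hxy : G.Adj x y) (hyz : G.Adj y z) (hzw : G.Adj z w) (hwx : G.Adj w x) :
    ∃ T : Finset V, G.IsNClique 3 T ∧
      (∃ T1 : Finset V, G.IsNClique 3 T1 ∧ SameBlock G T T1 ∧ x ∈ T1 ∧ y ∈ T1) ∧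
      (∃ T2 : Finset V, G.IsNClique 3 T2 ∧ SameBlock G T T2 ∧ y ∈ T2 ∧ z ∈ T2) ∧
      (∃ T3 : Finset V, G.IsNClique 3 T3 ∧ SameBlock G T T3 ∧ z ∈ T3 ∧ w ∈ T3) ∧
      (∃ T4 : Finset V, G.IsNClique 3 T4 ∧ SameBlock G T T4 ∧ w ∈ T4 ∧ x ∈ T4) := by
  -- take a triangle apex over edge x-y
  obtain ⟨a, hax, hay⟩ := hEdge x y hxy
  -- the apex must be z or w, else a,x,w,z,y is a 5-cycle
  have key : a = z ∨ a = w := by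
    by_contra h
    push_neg at h
    obtain ⟨haz, haw⟩ := h
    obtain ⟨v, c, hc, hl⟩ := c5_exists G a x w z y hax.symm hwx.symm hzw.symm hyz.symm hay
      haw haz hay.ne' hxz hxy.ne hyw.symm
    exact hC5 v c hc hl
  rcases key with h | h
  · -- a = z : x adjacent to z; triangles {x,y,z} and {x,z,w}
    have hxz' : G.Adj x z := h ▸ hax
    have hT : G.IsNClique 3 ({x, y, z} : Finset V) :=
      is3Clique_triple_iff.2 ⟨hxy, hxz', hyz⟩
    have hT' : G.IsNClique 3 ({x, z, w} : Finset V) :=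
      is3Clique_triple_iff.2 ⟨hxz', hwx.symm, hzw⟩
    have hstep : SameBlock G ({x, y, z} : Finset V) ({x, z, w} : Finset V) :=
      Relation.ReflTransGen.single ⟨hT, hT', pair_card_le hxz (by simp) (by simp) (by simp) (by simp)⟩
    exact ⟨{x, y, z}, hT,
      ⟨{x, y, z}, hT, Relation.ReflTransGen.refl, by simp, by simp⟩,
      ⟨{x, y, z}, hT, Relation.ReflTransGen.refl, by simp, by simp⟩,
      ⟨{x, z, w}, hT', hstep, by simp, by simp⟩,
      ⟨{x, z, w}, hT', hstep, by simp, by simp⟩⟩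
  · -- a = w : y adjacent to w; triangles {x,y,w} and {y,z,w}
    have hyw' : G.Adj y w := h ▸ hay
    have hT : G.IsNClique 3 ({x, y, w} : Finset V) :=
      is3Clique_triple_iff.2 ⟨hxy, hwx.symm, hyw'⟩
    have hT' : G.IsNClique 3 ({y, z, w} : Finset V) :=
      is3Clique_triple_iff.2 ⟨hyz, hyw', hzw⟩
    have hstep : SameBlock G ({x, y, w} : Finset V) ({y, z, w} : Finset V) :=
      Relation.ReflTransGen.single ⟨hT, hT', pair_card_le hyw (by simp) (by simp) (by simp) (by simp)⟩
    exact ⟨{x, y, w}, hT,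
      ⟨{x, y, w}, hT, Relation.ReflTransGen.refl, by simp, by simp⟩,
      ⟨{y, z, w}, hT', hstep, by simp, by simp⟩,
      ⟨{y, z, w}, hT', hstep, by simp, by simp⟩,
      ⟨{x, y, w}, hT, Relation.ReflTransGen.refl, by simp, by simp⟩⟩
end

section
/- Let G be a simple graph that contains no cycle of length 5 as a subgraph. Suppose a, b, c_1, c_2 are distinct vertices such that both abc_1 and abc_2 are triangles of G. If x is a vertex such that bc_1x (or ac_1x) is a triangle of G different from abc_1, then x = c_2. -/
lemma distinct_of_card3 {V : Type*} [DecidableEq V] {u v w : V}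
    (h : ({u, v, w} : Finset V).card = 3) : u ≠ v ∧ u ≠ w ∧ v ≠ w := by
  have key : ∀ (p q : V), ({u, v, w} : Finset V) ⊆ {p, q} → False := by
    intro p q hsub
    have h1 := Finset.card_le_card hsub
    have h2 := Finset.card_insert_le p ({q} : Finset V)
    simp at h2
    omega
  refine ⟨fun h' => key u w ?_, fun h' => key u v ?_, fun h' => key u v ?_⟩ <;>
    subst h' <;> intro z hz <;> simp at hz ⊢ <;> tauto

lemma no_c5 {V : Type*} (G : SimpleGraph V) (hC5 : C5Free G)
    (v₁ v₂ v₃ v₄ v₅ : V)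
    (h12 : G.Adj v₁ v₂) (h23 : G.Adj v₂ v₃) (h34 : G.Adj v₃ v₄)
    (h45 : G.Adj v₄ v₅) (h51 : G.Adj v₅ v₁)
    (d13 : v₁ ≠ v₃) (d14 : v₁ ≠ v₄) (d24 : v₂ ≠ v₄) (d25 : v₂ ≠ v₅)
    (d35 : v₃ ≠ v₅) : False := by
  classical
  let w : G.Walk v₁ v₁ :=
    .cons h12 (.cons h23 (.cons h34 (.cons h45 (.cons h51 .nil))))
  have hcyc : w.IsCycle := by
    have n12 := h12.ne; have n23 := h23.ne; have n34 := h34.ne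
    have n45 := h45.ne; have n51 := h51.ne
    simp only [w, SimpleGraph.Walk.isCycle_def, SimpleGraph.Walk.isTrail_def,
      SimpleGraph.Walk.edges_cons, SimpleGraph.Walk.edges_nil,
      SimpleGraph.Walk.support_cons, SimpleGraph.Walk.support_nil,
      List.nodup_cons, List.mem_cons, List.not_mem_nil, List.nodup_nil,
      List.tail_cons, Sym2.eq, Sym2.rel_iff', Prod.mk.injEq, Prod.swap_prod_mk]
    refine ⟨?_, by simp, ?_⟩ <;> aesop
  exact hC5 v₁ w hcyc (by simp [w])

theorem third_triangle_vertex_eq {V : Type*} [DecidableEq V] (G : SimpleGraph V)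
    (hC5 : C5Free G) (a b c₁ c₂ x : V)
    (hab : a ≠ b) (hac₁ : a ≠ c₁) (hac₂ : a ≠ c₂)
    (hbc₁ : b ≠ c₁) (hbc₂ : b ≠ c₂) (hc₁c₂ : c₁ ≠ c₂)
    (h₁ : G.IsNClique 3 {a, b, c₁}) (h₂ : G.IsNClique 3 {a, b, c₂})
    (hx : (G.IsNClique 3 {b, c₁, x} ∧ ({b, c₁, x} : Finset V) ≠ {a, b, c₁}) ∨
          (G.IsNClique 3 {a, c₁, x} ∧ ({a, c₁, x} : Finset V) ≠ {a, b, c₁})) :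
    x = c₂ := by
  have hadj : ∀ {s : Finset V} {u v : V}, G.IsNClique 3 s → u ∈ s → v ∈ s → u ≠ v →
      G.Adj u v := fun hc hu hv huv => hc.1 hu hv huv
  have hac₁' : G.Adj a c₁ := hadj h₁ (by simp) (by simp) hac₁
  have hbc₁' : G.Adj b c₁ := hadj h₁ (by simp) (by simp) hbc₁
  have hac₂' : G.Adj a c₂ := hadj h₂ (by simp) (by simp) hac₂
  have hbc₂' : G.Adj b c₂ := hadj h₂ (by simp) (by simp) hbc₂
  by_contra hxc₂
  rcases hx with ⟨ht, hne⟩ | ⟨ht, hne⟩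
  · obtain ⟨-, hbx, hc₁x⟩ := distinct_of_card3 ht.2
    have hxa : x ≠ a := by
      rintro rfl
      exact hne (by ext y; simp; tauto)
    have hbx' : G.Adj b x := hadj ht (by simp) (by simp) hbx
    have hc₁x' : G.Adj c₁ x := hadj ht (by simp) (by simp) hc₁x
    exact no_c5 G hC5 x c₁ a c₂ b hc₁x'.symm hac₁'.symm hac₂' hbc₂'.symm hbx'
      hxa hxc₂ hc₁c₂ hbc₁.symm hab
  · obtain ⟨-, hax, hc₁x⟩ := distinct_of_card3 ht.2
    have hxb : x ≠ b := by
      rintro rfl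
      exact hne (by ext y; simp; tauto)
    have hax' : G.Adj a x := hadj ht (by simp) (by simp) hax
    have hc₁x' : G.Adj c₁ x := hadj ht (by simp) (by simp) hc₁x
    exact no_c5 G hC5 x c₁ b c₂ a hc₁x'.symm hbc₁'.symm hbc₂' hac₂'.symm hax'
      hxb hxc₂ hc₁c₂ hac₁.symm hab.symm
end

section
/- Let G be a simple graph that contains no cycle of length 5 as a subgraph, and suppose the four vertices a, b, c, d induce a complete graph K4 in G (all six pairs are adjacent). Then every triangle of G that shares an edge with some triangle contained in {a, b, c, d} has all three of its vertices in {a, b, c, d}. -/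
lemma no_c5_path {V : Type*} {G : SimpleGraph V} (hC5 : C5Free G)
    {v x p q y : V} (hvx : G.Adj v x) (hvy : G.Adj v y)
    (hxp : G.Adj x p) (hpq : G.Adj p q) (hqy : G.Adj q y)
    (hxq : x ≠ q) (hxy : x ≠ y) (hpy : p ≠ y)
    (hvp : v ≠ p) (hvq : v ≠ q) : False := by
  have hyv : G.Adj y v := hvy.symm
  let w : G.Walk v v :=
    .cons hvx (.cons hxp (.cons hpq (.cons hqy (.cons hyv .nil))))
  refine hC5 v w ?_ rfl
  constructor
  · constructor
    · simp only [w, SimpleGraph.Walk.isTrail_def, SimpleGraph.Walk.edges_cons,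
        SimpleGraph.Walk.edges_nil, List.nodup_cons, List.mem_cons, List.not_mem_nil,
        List.nodup_nil, Sym2.eq, Sym2.rel_iff', Prod.mk.injEq, Prod.swap_prod_mk]
      refine ⟨?_, ?_, ?_, ?_, ?_⟩ <;>
        simp_all [hvx.ne, hvy.ne, hxp.ne, hpq.ne, hqy.ne, ne_comm]
    · simp [w]
  · simp only [w, SimpleGraph.Walk.support_cons, SimpleGraph.Walk.support_nil,
      List.tail_cons, List.nodup_cons, List.mem_cons, List.not_mem_nil, List.nodup_nil]
    refine ⟨?_, ?_, ?_, ?_, by trivial⟩ <;>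
      simp_all [hvx.ne, hvy.ne, hxp.ne, hpq.ne, hqy.ne, ne_comm]

theorem triangle_sharing_edge_with_K4_is_inside {V : Type*} [DecidableEq V]
    (G : SimpleGraph V) (hC5 : C5Free G) (a b c d : V)
    (hab : G.Adj a b) (hac : G.Adj a c) (had : G.Adj a d)
    (hbc : G.Adj b c) (hbd : G.Adj b d) (hcd : G.Adj c d)
    (T T' : Finset V) (hT : G.IsNClique 3 T) (hT' : G.IsNClique 3 T')
    (hT'sub : T' ⊆ ({a, b, c, d} : Finset V)) (hshare : 2 ≤ (T ∩ T').card) :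
    T ⊆ ({a, b, c, d} : Finset V) := by
  intro v hv
  by_contra hvS
  obtain ⟨x, hx, y, hy, hxy⟩ := Finset.one_lt_card.mp hshare
  have hxT : x ∈ T := (Finset.mem_inter.mp hx).1
  have hyT : y ∈ T := (Finset.mem_inter.mp hy).1
  have hxS : x ∈ ({a, b, c, d} : Finset V) := hT'sub (Finset.mem_inter.mp hx).2
  have hyS : y ∈ ({a, b, c, d} : Finset V) := hT'sub (Finset.mem_inter.mp hy).2
  have hvx : v ≠ x := fun h => hvS (h ▸ hxS)
  have hvy : v ≠ y := fun h => hvS (h ▸ hyS)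
  have hva : v ≠ a := fun h => hvS (by simp [h])
  have hvb : v ≠ b := fun h => hvS (by simp [h])
  have hvc : v ≠ c := fun h => hvS (by simp [h])
  have hvd : v ≠ d := fun h => hvS (by simp [h])
  have advx : G.Adj v x := hT.1 hv hxT hvx
  have advy : G.Adj v y := hT.1 hv hyT hvy
  simp only [Finset.mem_insert, Finset.mem_singleton] at hxS hyS
  rcases hxS with rfl | rfl | rfl | rfl <;> rcases hyS with rfl | rfl | rfl | rfl
  · exact hxy rfl
  · exact no_c5_path hC5 advx advy hac hcd hbd.symm had.ne hab.ne hbc.ne' hvc hvd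
  · exact no_c5_path hC5 advx advy hab hbd hcd.symm had.ne hac.ne hbc.ne hvb hvd
  · exact no_c5_path hC5 advx advy hab hbc hcd hac.ne had.ne hbd.ne hvb hvc
  · exact no_c5_path hC5 advx advy hbc hcd had.symm hbd.ne hab.ne' hac.ne' hvc hvd
  · exact hxy rfl
  · exact no_c5_path hC5 advx advy hab.symm had hcd.symm hbd.ne hbc.ne hac.ne hva hvd
  · exact no_c5_path hC5 advx advy hab.symm hac hcd hbc.ne hbd.ne had.ne hva hvc
  · exact no_c5_path hC5 advx advy hbc.symm hbd had.symm hcd.ne hac.ne' hab.ne' hvb hvd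
  · exact no_c5_path hC5 advx advy hac.symm had hbd.symm hcd.ne hbc.ne' hab.ne hva hvd
  · exact hxy rfl
  · exact no_c5_path hC5 advx advy hac.symm hab hbd hbc.ne' hcd.ne had.ne hva hvb
  · exact no_c5_path hC5 advx advy hbd.symm hbc hac.symm hcd.ne' had.ne' hab.ne' hvb hvc
  · exact no_c5_path hC5 advx advy had.symm hac hbc.symm hcd.ne' hbd.ne' hab.ne hva hvc
  · exact no_c5_path hC5 advx advy had.symm hab hbc hbd.ne' hcd.ne' hac.ne hva hvb
  · exact hxy rfl
end

section
/- Let G_0 be a bipartite simple graph with parts A and B that contains no cycle of length 4 as a subgraph. Let G be the graph on vertex set A ∪ (B × {0,1}) whose edges are: {(b,0),(b,1)} for every b ∈ B, and {a,(b,i)} for every edge {a,b} of G_0 and each i ∈ {0,1}. Then G contains no cycle of length 5 as a subgraph, and the number of triangles of G equals the number of edges of G_0. -/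
/-- The doubling construction of Bollobás and Győri: each vertex `b` of the part `β`
is doubled into `(b, false)` and `(b, true)`, which are joined by an edge, and each
edge `{a, b}` of `G₀` gives rise to the edges `{a, (b, false)}` and `{a, (b, true)}`. -/
def doubledGraph {α β : Type*} (G₀ : SimpleGraph (α ⊕ β)) :
    SimpleGraph (α ⊕ β × Bool) :=
  SimpleGraph.fromRel (fun u v =>
    (∃ (b : β) (i j : Bool), i ≠ j ∧ u = Sum.inr (b, i) ∧ v = Sum.inr (b, j)) ∨
    (∃ (a : α) (b : β) (i : Bool), u = Sum.inl a ∧ v = Sum.inr (b, i) ∧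
      G₀.Adj (Sum.inl a) (Sum.inr b)))

open Sum

section Aux

variable {α β : Type*} {G₀ : SimpleGraph (α ⊕ β)}

lemma dAdj_inl_inl (a a' : α) : ¬ (doubledGraph G₀).Adj (inl a) (inl a') := by
  simp [doubledGraph, SimpleGraph.fromRel_adj]

lemma dAdj_inl_inr {a : α} {b : β} {i : Bool} :
    (doubledGraph G₀).Adj (inl a) (inr (b, i)) ↔ G₀.Adj (inl a) (inr b) := by
  simp [doubledGraph, SimpleGraph.fromRel_adj]
  aesop

lemma dAdj_inr_inr {b b' : β} {i j : Bool} :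
    (doubledGraph G₀).Adj (inr (b, i)) (inr (b', j)) ↔ b = b' ∧ i ≠ j := by
  simp [doubledGraph, SimpleGraph.fromRel_adj]
  cases i <;> cases j <;> aesop

lemma dAdj_inr_inl {a : α} {b : β} {i : Bool} :
    (doubledGraph G₀).Adj (inr (b, i)) (inl a) ↔ G₀.Adj (inl a) (inr b) := by
  rw [SimpleGraph.adj_comm]; exact dAdj_inl_inr

lemma no_c4 {V : Type*} {G : SimpleGraph V} (hC4 : C4Free G) {a b c d : V}
    (hab : G.Adj a b) (hbc : G.Adj b c) (hcd : G.Adj c d) (hda : G.Adj d a)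
    (hac : a ≠ c) (hbd : b ≠ d) : False := by
  refine hC4 a (.cons hab (.cons hbc (.cons hcd (.cons hda .nil)))) ?_ (by simp)
  have h1 := hab.ne
  have h2 := hbc.ne
  have h3 := hcd.ne
  have h4 := hda.ne
  simp only [SimpleGraph.Walk.isCycle_def, SimpleGraph.Walk.isTrail_def]
  refine ⟨?_, by simp, ?_⟩
  · simp [Sym2.eq_iff]
    aesop
  · simp
    aesop

lemma vert_trans {x y z : β × Bool}
    (h1 : (doubledGraph G₀).Adj (inr x) (inr y))
    (h2 : (doubledGraph G₀).Adj (inr y) (inr z)) : x = z := by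
  obtain ⟨b, i⟩ := x; obtain ⟨b', j⟩ := y; obtain ⟨b'', k⟩ := z
  rw [dAdj_inr_inr] at h1 h2
  obtain ⟨rfl, hij⟩ := h1; obtain ⟨rfl, hjk⟩ := h2
  cases i <;> cases j <;> cases k <;> simp_all

lemma two_inl (hC4 : C4Free G₀) {a a' : α} {x y z : β × Bool}
    (h1 : (doubledGraph G₀).Adj (inl a) (inr x))
    (h2 : (doubledGraph G₀).Adj (inr x) (inl a'))
    (h3 : (doubledGraph G₀).Adj (inl a') (inr y))
    (h4 : (doubledGraph G₀).Adj (inr y) (inr z))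
    (h5 : (doubledGraph G₀).Adj (inr z) (inl a))
    (haa : (inl a : α ⊕ β × Bool) ≠ inl a')
    (hxy : (inr x : α ⊕ β × Bool) ≠ inr y)
    (hxz : (inr x : α ⊕ β × Bool) ≠ inr z) : False := by
  obtain ⟨b1, i1⟩ := x; obtain ⟨b3, i3⟩ := y; obtain ⟨b4, i4⟩ := z
  rw [dAdj_inl_inr] at h1 h3
  rw [dAdj_inr_inl] at h2 h5
  rw [dAdj_inr_inr] at h4
  obtain ⟨rfl, hi34⟩ := h4
  have hb : b1 ≠ b3 := by
    rintro rfl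
    simp only [ne_eq, inr.injEq, Prod.mk.injEq] at hxy hxz
    cases i1 <;> cases i3 <;> cases i4 <;> simp_all
  exact no_c4 hC4 h1 h2.symm h3 h5.symm (by simpa using haa) (by simp [hb])

lemma core (hC4 : C4Free G₀) {v0 v1 v2 v3 v4 : α ⊕ β × Bool}
    (h1 : (doubledGraph G₀).Adj v0 v1) (h2 : (doubledGraph G₀).Adj v1 v2)
    (h3 : (doubledGraph G₀).Adj v2 v3) (h4 : (doubledGraph G₀).Adj v3 v4)
    (h5 : (doubledGraph G₀).Adj v4 v0)
    (d12 : v1 ≠ v2) (d13 : v1 ≠ v3) (d14 : v1 ≠ v4) (d10 : v1 ≠ v0)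
    (d23 : v2 ≠ v3) (d24 : v2 ≠ v4) (d20 : v2 ≠ v0)
    (d34 : v3 ≠ v4) (d30 : v3 ≠ v0) (d40 : v4 ≠ v0) : False := by
  rcases v0 with a0 | x0 <;> rcases v1 with a1 | x1 <;> rcases v2 with a2 | x2 <;>
    rcases v3 with a3 | x3 <;> rcases v4 with a4 | x4 <;>
  first
    | exact absurd h1 (dAdj_inl_inl _ _)
    | exact absurd h2 (dAdj_inl_inl _ _)
    | exact absurd h3 (dAdj_inl_inl _ _)
    | exact absurd h4 (dAdj_inl_inl _ _)
    | exact absurd h5 (dAdj_inl_inl _ _)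
    | exact d20 (congrArg Sum.inr (vert_trans h1 h2).symm)
    | exact d13 (congrArg Sum.inr (vert_trans h2 h3))
    | exact d24 (congrArg Sum.inr (vert_trans h3 h4))
    | exact d30 (congrArg Sum.inr (vert_trans h4 h5))
    | exact d14 (congrArg Sum.inr (vert_trans h5 h1).symm)
    | exact two_inl hC4 h1 h2 h3 h4 h5 d20.symm d13 d14
    | exact two_inl hC4 h4 h5 h1 h2 h3 d30 d14.symm d24.symm
    | exact two_inl hC4 h2 h3 h4 h5 h1 d13 d24 d20
    | exact two_inl hC4 h5 h1 h2 h3 h4 d14.symm d20.symm d30.symm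
    | exact two_inl hC4 h3 h4 h5 h1 h2 d24 d30 d13.symm

lemma noC5 (hC4 : C4Free G₀) : C5Free (doubledGraph G₀) := by
  intro v w hw hlen
  cases w with
  | nil => simp at hlen
  | cons h1 p1 =>
  cases p1 with
  | nil => simp at hlen
  | cons h2 p2 =>
  cases p2 with
  | nil => simp at hlen
  | cons h3 p3 =>
  cases p3 with
  | nil => simp at hlen
  | cons h4 p4 =>
  cases p4 with
  | cons h5 p5 =>
    cases p5 with
    | nil =>
      have hnd := hw.2
      simp [SimpleGraph.Walk.support_cons] at hnd
      obtain ⟨⟨d12, d13, d14, d10⟩, ⟨d23, d24, d20⟩, ⟨d34, d30⟩, d40⟩ := hnd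
      exact core hC4 h1 h2 h3 h4 h5 d12 d13 d14 d10 d23 d24 d20 d34 d30 d40
    | cons h6 p6 => simp [SimpleGraph.Walk.length_cons] at hlen
  | nil => simp at hlen

section DecEq

variable [DecidableEq α] [DecidableEq β]

set_option linter.unusedSectionVars false

lemma triangle_struct {x y z : α ⊕ β × Bool}
    (hxy : (doubledGraph G₀).Adj x y) (hxz : (doubledGraph G₀).Adj x z)
    (hyz : (doubledGraph G₀).Adj y z) :
    ∃ a b, G₀.Adj (inl a) (inr b) ∧
      ({x, y, z} : Finset (α ⊕ β × Bool)) = {inl a, inr (b, false), inr (b, true)} := by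
  rcases x with a | ⟨b, i⟩ <;> rcases y with a' | ⟨b', i'⟩ <;> rcases z with a'' | ⟨b'', i''⟩
  · exact absurd hxy (dAdj_inl_inl _ _)
  · exact absurd hxy (dAdj_inl_inl _ _)
  · exact absurd hxz (dAdj_inl_inl _ _)
  · rw [dAdj_inl_inr] at hxy
    rw [dAdj_inr_inr] at hyz
    obtain ⟨rfl, hij⟩ := hyz
    refine ⟨a, b', hxy, ?_⟩
    ext u
    cases i' <;> cases i'' <;> simp_all <;> tauto
  · exact absurd hyz (dAdj_inl_inl _ _)
  · rw [dAdj_inr_inl] at hxy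
    rw [dAdj_inr_inr] at hxz
    obtain ⟨rfl, hij⟩ := hxz
    refine ⟨a', b, hxy, ?_⟩
    ext u
    cases i <;> cases i'' <;> simp_all <;> tauto
  · rw [dAdj_inr_inl] at hxz
    rw [dAdj_inr_inr] at hxy
    obtain ⟨rfl, hij⟩ := hxy
    refine ⟨a'', b, hxz, ?_⟩
    ext u
    cases i <;> cases i' <;> simp_all <;> tauto
  · rw [dAdj_inr_inr] at hxy hxz hyz
    obtain ⟨rfl, h1⟩ := hxy
    obtain ⟨rfl, h2⟩ := hxz
    obtain ⟨_, h3⟩ := hyz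
    cases i <;> cases i' <;> cases i'' <;> simp_all

lemma triangle_set_eq :
    {t : Finset (α ⊕ β × Bool) | (doubledGraph G₀).IsNClique 3 t} =
      (fun p : α × β => ({inl p.1, inr (p.2, false), inr (p.2, true)} : Finset (α ⊕ β × Bool))) ''
        {p : α × β | G₀.Adj (inl p.1) (inr p.2)} := by
  ext t
  constructor
  · intro ht
    rw [Set.mem_setOf_eq, SimpleGraph.is3Clique_iff] at ht
    obtain ⟨x, y, z, hxy, hxz, hyz, rfl⟩ := ht
    obtain ⟨a, b, hab, heq⟩ := triangle_struct hxy hxz hyz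
    exact ⟨(a, b), hab, heq.symm⟩
  · rintro ⟨⟨a, b⟩, hab, rfl⟩
    rw [Set.mem_setOf_eq, SimpleGraph.is3Clique_triple_iff]
    rw [Set.mem_setOf_eq] at hab
    refine ⟨?_, ?_, ?_⟩ <;> simp [dAdj_inl_inr, dAdj_inr_inr, hab]

lemma f_inj : Function.Injective
    (fun p : α × β => ({inl p.1, inr (p.2, false), inr (p.2, true)} : Finset (α ⊕ β × Bool))) := by
  rintro ⟨a, b⟩ ⟨a', b'⟩ h
  simp only at h
  have h1 := Finset.ext_iff.mp h (inl a)
  have h2 := Finset.ext_iff.mp h (inr (b, false))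
  simp at h1 h2
  simp [h1, h2]

end DecEq

lemma g_inj : Function.Injective
    (fun p : α × β => (s(inl p.1, inr p.2) : Sym2 (α ⊕ β))) := by
  rintro ⟨a, b⟩ ⟨a', b'⟩ h
  simp [Sym2.eq_iff] at h
  simp [h.1, h.2]

lemma edge_set_eq (hA : ∀ a a' : α, ¬ G₀.Adj (Sum.inl a) (Sum.inl a'))
    (hB : ∀ b b' : β, ¬ G₀.Adj (Sum.inr b) (Sum.inr b')) :
    G₀.edgeSet =
      (fun p : α × β => (s(inl p.1, inr p.2) : Sym2 (α ⊕ β))) ''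
        {p : α × β | G₀.Adj (inl p.1) (inr p.2)} := by
  ext e
  induction e with
  | _ u v =>
    constructor
    · intro h
      rw [SimpleGraph.mem_edgeSet] at h
      rcases u with a | b <;> rcases v with a' | b'
      · exact absurd h (hA _ _)
      · exact ⟨(a, b'), h, rfl⟩
      · exact ⟨(a', b), h.symm, Sym2.eq_swap⟩
      · exact absurd h (hB _ _)
    · rintro ⟨⟨a, b⟩, hab, heq⟩
      rw [SimpleGraph.mem_edgeSet, ← SimpleGraph.mem_edgeSet, ← heq]
      exact hab

end Aux

theorem doubling_construction {α β : Type*} [Fintype α] [Fintype β]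
    (G₀ : SimpleGraph (α ⊕ β))
    (hA : ∀ a a' : α, ¬ G₀.Adj (Sum.inl a) (Sum.inl a'))
    (hB : ∀ b b' : β, ¬ G₀.Adj (Sum.inr b) (Sum.inr b'))
    (hC4 : C4Free G₀) :
    C5Free (doubledGraph G₀) ∧
      {t : Finset (α ⊕ β × Bool) | (doubledGraph G₀).IsNClique 3 t}.ncard =
        G₀.edgeSet.ncard := by
  classical
  refine ⟨noC5 hC4, ?_⟩
  rw [triangle_set_eq, edge_set_eq hA hB,
    Set.ncard_image_of_injective _ f_inj, Set.ncard_image_of_injective _ g_inj]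
end

section
/- For every ε > 0 there exists N such that for all n ≥ N, every simple graph on n vertices that contains neither a cycle of length 4 nor a cycle of length 5 as a subgraph has at most (1/(2√2) + ε)·n^{3/2} edges. -/
open SimpleGraph Finset

section aux
variable {n : ℕ} {G : SimpleGraph (Fin n)} [DecidableRel G.Adj]

lemma no4 (h4 : C4Free G) {a b c d : Fin n}
    (hab : G.Adj a b) (hbc : G.Adj b c) (hcd : G.Adj c d) (hda : G.Adj d a)
    (hac : a ≠ c) (hbd : b ≠ d) : False := by
  have hba := hab.ne'
  have hcb := hbc.ne'
  have hdc := hcd.ne'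
  have had := hda.ne'
  refine h4 a (.cons hab (.cons hbc (.cons hcd (.cons hda .nil)))) ?_ (by simp)
  rw [SimpleGraph.Walk.isCycle_def]
  refine ⟨?_, by simp, ?_⟩
  · rw [SimpleGraph.Walk.isTrail_def]
    simp [Sym2.eq_iff]
    aesop
  · simp [List.nodup_cons]
    aesop

lemma no5 (h5 : C5Free G) {a b c d e : Fin n}
    (hab : G.Adj a b) (hbc : G.Adj b c) (hcd : G.Adj c d) (hde : G.Adj d e)
    (hea : G.Adj e a)
    (hac : a ≠ c) (had : a ≠ d) (hbd : b ≠ d) (hbe : b ≠ e) (hce : c ≠ e) : False := by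
  have hba := hab.ne'
  have hcb := hbc.ne'
  have hdc := hcd.ne'
  have hed := hde.ne'
  have hae := hea.ne'
  refine h5 a (.cons hab (.cons hbc (.cons hcd (.cons hde (.cons hea .nil))))) ?_ (by simp)
  rw [SimpleGraph.Walk.isCycle_def]
  refine ⟨?_, by simp, ?_⟩
  · rw [SimpleGraph.Walk.isTrail_def]
    simp [Sym2.eq_iff]
    aesop
  · simp [List.nodup_cons]
    aesop

lemma disjHelper (h4 : C4Free G) {u x x' z : Fin n} (hx : G.Adj u x) (hx' : G.Adj u x')
    (hxx' : x ≠ x') (hz : G.Adj x z) (hz' : G.Adj x' z) (hzu : z ≠ u) : False :=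
  no4 h4 hx hz hz'.symm hx'.symm hzu.symm hxx'

/-- any two distinct vertices have at most one common neighbor -/
lemma common_card (h4 : C4Free G) {u w : Fin n} (hne : u ≠ w) :
    (G.neighborFinset u ∩ G.neighborFinset w).card ≤ 1 := by
  by_contra h
  have h2 : 1 < (G.neighborFinset u ∩ G.neighborFinset w).card := by omega
  obtain ⟨a, ha, b, hb, hab⟩ := Finset.one_lt_card.mp h2
  rw [Finset.mem_inter, SimpleGraph.mem_neighborFinset, SimpleGraph.mem_neighborFinset] at ha hb
  exact no4 h4 ha.1 ha.2.symm hb.2 hb.1.symm hne hab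

/-- sum of degrees over a neighborhood is at most `n + degree` -/
lemma f_le (h4 : C4Free G) (v : Fin n) :
    ∑ x ∈ G.neighborFinset v, G.degree x ≤ n + G.degree v := by
  classical
  set S : Fin n → Finset (Fin n) := fun x => G.neighborFinset x \ {v} with hS
  have hdisj : ∀ x ∈ G.neighborFinset v, ∀ y ∈ G.neighborFinset v, x ≠ y →
      Disjoint (S x) (S y) := by
    intro x hx y hy hxy
    rw [Finset.disjoint_left]
    intro z hz hz'
    simp only [hS, Finset.mem_sdiff, SimpleGraph.mem_neighborFinset, Finset.mem_singleton] at hz hz'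
    rw [SimpleGraph.mem_neighborFinset] at hx hy
    exact disjHelper h4 hx hy hxy hz.1 hz'.1 hz.2
  have key : ∑ x ∈ G.neighborFinset v, (S x).card ≤ n := by
    rw [← Finset.card_biUnion hdisj]
    exact (Finset.card_le_univ _).trans_eq (Finset.card_fin n)
  have step : ∀ x ∈ G.neighborFinset v, G.degree x ≤ (S x).card + 1 := by
    intro x _
    have h1 := Finset.card_le_card_sdiff_add_card (s := G.neighborFinset x)
      (t := ({v} : Finset (Fin n)))
    rw [Finset.card_singleton] at h1
    rw [← SimpleGraph.card_neighborFinset_eq_degree]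
    exact h1
  calc ∑ x ∈ G.neighborFinset v, G.degree x ≤ ∑ x ∈ G.neighborFinset v, ((S x).card + 1) :=
        Finset.sum_le_sum step
    _ = (∑ x ∈ G.neighborFinset v, (S x).card) + G.degree v := by
        rw [Finset.sum_add_distrib, Finset.sum_const, SimpleGraph.degree, smul_eq_mul, mul_one]
    _ ≤ n + G.degree v := by omega

/-- the key per-edge inequality using both C4- and C5-freeness -/
lemma edge_ineq (h4 : C4Free G) (h5 : C5Free G) {u v : Fin n} (huv : G.Adj u v) :
    (∑ x ∈ G.neighborFinset u, G.degree x) + (∑ x ∈ G.neighborFinset v, G.degree x) ≤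
      n + 3 * (G.degree u + G.degree v) +
        2 * ∑ w ∈ G.neighborFinset u ∩ G.neighborFinset v, G.degree w := by
  classical
  set A : Finset (Fin n) := G.neighborFinset u \ insert v (G.neighborFinset v) with hA
  set B : Finset (Fin n) := G.neighborFinset v \ insert u (G.neighborFinset u) with hB
  set S : Fin n → Finset (Fin n) := fun x => G.neighborFinset x \ {u, v} with hS
  have hmemA : ∀ x ∈ A, G.Adj u x ∧ x ≠ v ∧ ¬ G.Adj v x := by
    intro x hx
    simp only [hA, Finset.mem_sdiff, SimpleGraph.mem_neighborFinset, Finset.mem_insert,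
      not_or] at hx
    exact ⟨hx.1, hx.2.1, hx.2.2⟩
  have hmemB : ∀ x ∈ B, G.Adj v x ∧ x ≠ u ∧ ¬ G.Adj u x := by
    intro x hx
    simp only [hB, Finset.mem_sdiff, SimpleGraph.mem_neighborFinset, Finset.mem_insert,
      not_or] at hx
    exact ⟨hx.1, hx.2.1, hx.2.2⟩
  have hmemS : ∀ x z, z ∈ S x → G.Adj x z ∧ z ≠ u ∧ z ≠ v := by
    intro x z hz
    simp only [hS, Finset.mem_sdiff, SimpleGraph.mem_neighborFinset, Finset.mem_insert,
      Finset.mem_singleton, not_or] at hz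
    exact ⟨hz.1, hz.2.1, hz.2.2⟩
  have hABdisj : Disjoint A B := by
    rw [Finset.disjoint_left]
    intro x hx hx'
    exact (hmemB x hx').2.2 (hmemA x hx).1
  -- the second neighborhoods are pairwise disjoint
  have hdisj : ∀ x ∈ A ∪ B, ∀ y ∈ A ∪ B, x ≠ y → Disjoint (S x) (S y) := by
    intro x hx y hy hxy
    rw [Finset.disjoint_left]
    intro z hzx hzy
    obtain ⟨hxz, hzu, hzv⟩ := hmemS x z hzx
    obtain ⟨hyz, _, _⟩ := hmemS y z hzy
    rw [Finset.mem_union] at hx hy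
    rcases hx with hx | hx <;> rcases hy with hy | hy
    · exact disjHelper h4 (hmemA x hx).1 (hmemA y hy).1 hxy hxz hyz hzu
    · -- x ∈ A, y ∈ B : a C5  u - x - z - y - v - u
      exact no5 h5 (hmemA x hx).1 hxz hyz.symm ((hmemB y hy).1).symm huv.symm
        hzu.symm (hmemB y hy).2.1.symm hxy (hmemA x hx).2.1 hzv
    · -- x ∈ B, y ∈ A : symmetric
      exact no5 h5 (hmemA y hy).1 hyz hxz.symm ((hmemB x hx).1).symm huv.symm
        hzu.symm (hmemB x hx).2.1.symm hxy.symm (hmemA y hy).2.1 hzv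
    · exact disjHelper h4 (hmemB x hx).1 (hmemB y hy).1 hxy hxz hyz hzv
  have key : ∑ x ∈ A ∪ B, (S x).card ≤ n := by
    rw [← Finset.card_biUnion hdisj]
    exact (Finset.card_le_univ _).trans_eq (Finset.card_fin n)
  have hcard : ∀ x, G.degree x ≤ (S x).card + 2 := by
    intro x
    have h1 := Finset.card_le_card_sdiff_add_card (s := G.neighborFinset x)
      (t := ({u, v} : Finset (Fin n)))
    have h2 : ({u, v} : Finset (Fin n)).card ≤ 2 :=
      (Finset.card_insert_le u {v}).trans (by simp)
    rw [← SimpleGraph.card_neighborFinset_eq_degree]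
    simp only [hS]
    omega
  have hsubA : A ⊆ G.neighborFinset u := by rw [hA]; exact Finset.sdiff_subset
  have hsubB : B ⊆ G.neighborFinset v := by rw [hB]; exact Finset.sdiff_subset
  have hfu : ∑ x ∈ G.neighborFinset u, G.degree x ≤ (∑ x ∈ A, G.degree x) +
      (G.degree v + ∑ w ∈ G.neighborFinset u ∩ G.neighborFinset v, G.degree w) := by
    have hsub : G.neighborFinset u ⊆
        A ∪ insert v (G.neighborFinset u ∩ G.neighborFinset v) := by
      intro z hz
      rw [Finset.mem_union, Finset.mem_insert]
      by_cases hzz : z ∈ insert v (G.neighborFinset v)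
      · rw [Finset.mem_insert] at hzz
        rcases hzz with h | h
        · exact Or.inr (Or.inl h)
        · exact Or.inr (Or.inr (Finset.mem_inter.mpr ⟨hz, h⟩))
      · exact Or.inl (by rw [hA]; exact Finset.mem_sdiff.mpr ⟨hz, hzz⟩)
    have hstep : ∑ x ∈ G.neighborFinset u, G.degree x ≤
        ∑ x ∈ A ∪ insert v (G.neighborFinset u ∩ G.neighborFinset v), G.degree x :=
      Finset.sum_le_sum_of_subset (f := fun x => G.degree x) hsub
    have hui := Finset.sum_union_inter (s₁ := A)
      (s₂ := insert v (G.neighborFinset u ∩ G.neighborFinset v)) (f := fun x : Fin n => G.degree x)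
    have hvI : v ∉ G.neighborFinset u ∩ G.neighborFinset v := by
      simp [SimpleGraph.irrefl]
    rw [Finset.sum_insert hvI] at hui
    omega
  have hfv : ∑ x ∈ G.neighborFinset v, G.degree x ≤ (∑ x ∈ B, G.degree x) +
      (G.degree u + ∑ w ∈ G.neighborFinset u ∩ G.neighborFinset v, G.degree w) := by
    have hsub : G.neighborFinset v ⊆
        B ∪ insert u (G.neighborFinset u ∩ G.neighborFinset v) := by
      intro z hz
      rw [Finset.mem_union, Finset.mem_insert]
      by_cases hzz : z ∈ insert u (G.neighborFinset u)
      · rw [Finset.mem_insert] at hzz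
        rcases hzz with h | h
        · exact Or.inr (Or.inl h)
        · exact Or.inr (Or.inr (Finset.mem_inter.mpr ⟨h, hz⟩))
      · exact Or.inl (by rw [hB]; exact Finset.mem_sdiff.mpr ⟨hz, hzz⟩)
    have hstep : ∑ x ∈ G.neighborFinset v, G.degree x ≤
        ∑ x ∈ B ∪ insert u (G.neighborFinset u ∩ G.neighborFinset v), G.degree x :=
      Finset.sum_le_sum_of_subset (f := fun x => G.degree x) hsub
    have hui := Finset.sum_union_inter (s₁ := B)
      (s₂ := insert u (G.neighborFinset u ∩ G.neighborFinset v)) (f := fun x : Fin n => G.degree x)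
    have huI : u ∉ G.neighborFinset u ∩ G.neighborFinset v := by
      simp [SimpleGraph.irrefl]
    rw [Finset.sum_insert huI] at hui
    omega
  have hAB : (∑ x ∈ A, G.degree x) + (∑ x ∈ B, G.degree x) ≤
      n + 2 * (G.degree u + G.degree v) := by
    have h1 : ∑ x ∈ A, G.degree x ≤ (∑ x ∈ A, (S x).card) + 2 * A.card := by
      calc ∑ x ∈ A, G.degree x ≤ ∑ x ∈ A, ((S x).card + 2) :=
            Finset.sum_le_sum fun x _ => hcard x
        _ = (∑ x ∈ A, (S x).card) + 2 * A.card := by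
            rw [Finset.sum_add_distrib, Finset.sum_const, smul_eq_mul, mul_comm]
    have h2 : ∑ x ∈ B, G.degree x ≤ (∑ x ∈ B, (S x).card) + 2 * B.card := by
      calc ∑ x ∈ B, G.degree x ≤ ∑ x ∈ B, ((S x).card + 2) :=
            Finset.sum_le_sum fun x _ => hcard x
        _ = (∑ x ∈ B, (S x).card) + 2 * B.card := by
            rw [Finset.sum_add_distrib, Finset.sum_const, smul_eq_mul, mul_comm]
    have h3 : (∑ x ∈ A, (S x).card) + (∑ x ∈ B, (S x).card) ≤ n := by
      rw [← Finset.sum_union hABdisj]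
      exact key
    have h4A : A.card ≤ G.degree u := by
      rw [← SimpleGraph.card_neighborFinset_eq_degree]
      exact Finset.card_le_card hsubA
    have h4B : B.card ≤ G.degree v := by
      rw [← SimpleGraph.card_neighborFinset_eq_degree]
      exact Finset.card_le_card hsubB
    omega
  omega


lemma swapSum {M : Type*} [AddCommMonoid M] (g : Fin n → M) :
    ∑ u, ∑ v ∈ G.neighborFinset u, g v = ∑ v, (G.degree v) • g v := by
  rw [Finset.sum_comm' (t' := Finset.univ) (s' := fun v => G.neighborFinset v)
    (fun u v => by simp [SimpleGraph.adj_comm])]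
  refine Finset.sum_congr rfl fun v _ => ?_
  rw [Finset.sum_const]
  rfl

lemma triple_le (h4 : C4Free G) (u : Fin n) :
    ∑ v ∈ G.neighborFinset u, ∑ w ∈ G.neighborFinset u ∩ G.neighborFinset v, G.degree w ≤
      ∑ w ∈ G.neighborFinset u, G.degree w := by
  rw [Finset.sum_comm' (t' := G.neighborFinset u)
    (s' := fun w => G.neighborFinset u ∩ G.neighborFinset w) ?_]
  · refine Finset.sum_le_sum fun w hw => ?_
    rw [Finset.sum_const]
    have h1 : (G.neighborFinset u ∩ G.neighborFinset w).card ≤ 1 :=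
      common_card h4 ((G.mem_neighborFinset u w).mp hw).ne
    calc (G.neighborFinset u ∩ G.neighborFinset w).card • G.degree w
        ≤ 1 * G.degree w := Nat.mul_le_mul_right _ h1
      _ = G.degree w := one_mul _
  · intro v w
    simp only [Finset.mem_inter, SimpleGraph.mem_neighborFinset]
    constructor
    · rintro ⟨h1, h2, h3⟩; exact ⟨⟨h1, h3.symm⟩, h2⟩
    · rintro ⟨⟨h1, h2⟩, h3⟩; exact ⟨h1, h3, h2.symm⟩

lemma global_nat (h4 : C4Free G) (h5 : C5Free G) :
    2 * ∑ v, G.degree v * (∑ x ∈ G.neighborFinset v, G.degree x) ≤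
      n * (∑ v, G.degree v) + 8 * (n * n + ∑ v, G.degree v) := by
  classical
  have hsumf : ∑ v, (∑ x ∈ G.neighborFinset v, G.degree x) = ∑ v, G.degree v * G.degree v := by
    rw [swapSum (fun v => G.degree v)]
    simp [smul_eq_mul]
  have main : ∑ u, ∑ v ∈ G.neighborFinset u,
      ((∑ x ∈ G.neighborFinset u, G.degree x) + (∑ x ∈ G.neighborFinset v, G.degree x)) ≤
      ∑ u, ∑ v ∈ G.neighborFinset u,
        (n + 3 * (G.degree u + G.degree v) +
          2 * ∑ w ∈ G.neighborFinset u ∩ G.neighborFinset v, G.degree w) :=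
    Finset.sum_le_sum fun u _ => Finset.sum_le_sum fun v hv =>
      edge_ineq h4 h5 ((G.mem_neighborFinset u v).mp hv)
  have hL : ∑ u, ∑ v ∈ G.neighborFinset u,
      ((∑ x ∈ G.neighborFinset u, G.degree x) + (∑ x ∈ G.neighborFinset v, G.degree x)) =
      2 * ∑ v, G.degree v * (∑ x ∈ G.neighborFinset v, G.degree x) := by
    simp only [Finset.sum_add_distrib]
    rw [swapSum (fun v => ∑ x ∈ G.neighborFinset v, G.degree x)]
    have : ∀ u : Fin n, ∑ _v ∈ G.neighborFinset u, (∑ x ∈ G.neighborFinset u, G.degree x)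
        = G.degree u * (∑ x ∈ G.neighborFinset u, G.degree x) := by
      intro u; rw [Finset.sum_const]; rfl
    rw [Finset.sum_congr rfl fun u _ => this u]
    simp only [smul_eq_mul]
    ring
  have hR : ∀ u : Fin n, ∑ v ∈ G.neighborFinset u,
      (n + 3 * (G.degree u + G.degree v) +
        2 * ∑ w ∈ G.neighborFinset u ∩ G.neighborFinset v, G.degree w) ≤
      G.degree u * n + 3 * (G.degree u * G.degree u) +
        5 * (∑ x ∈ G.neighborFinset u, G.degree x) := by
    intro u
    rw [Finset.sum_add_distrib, Finset.sum_add_distrib]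
    have p1 : ∑ _v ∈ G.neighborFinset u, n = G.degree u * n := by
      rw [Finset.sum_const]; rfl
    have p2 : ∑ v ∈ G.neighborFinset u, 3 * (G.degree u + G.degree v) =
        3 * (G.degree u * G.degree u) + 3 * (∑ x ∈ G.neighborFinset u, G.degree x) := by
      rw [← Finset.mul_sum, Finset.sum_add_distrib, Finset.sum_const]
      have : (G.neighborFinset u).card • G.degree u = G.degree u * G.degree u := by
        rw [smul_eq_mul, SimpleGraph.card_neighborFinset_eq_degree]
      rw [this, Nat.mul_add]
    have p3 : ∑ v ∈ G.neighborFinset u,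
        2 * ∑ w ∈ G.neighborFinset u ∩ G.neighborFinset v, G.degree w ≤
        2 * (∑ x ∈ G.neighborFinset u, G.degree x) := by
      rw [← Finset.mul_sum]
      exact Nat.mul_le_mul_left _ (triple_le h4 u)
    rw [p1, p2]
    omega
  have hsum2 : ∑ u, (G.degree u * n + 3 * (G.degree u * G.degree u) +
      5 * (∑ x ∈ G.neighborFinset u, G.degree x)) =
      n * (∑ v, G.degree v) + 8 * (∑ v, G.degree v * G.degree v) := by
    rw [Finset.sum_add_distrib, Finset.sum_add_distrib, ← Finset.sum_mul, ← Finset.mul_sum,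
      ← Finset.mul_sum, hsumf]
    ring
  have hfle : ∑ v, (∑ x ∈ G.neighborFinset v, G.degree x) ≤ n * n + ∑ v, G.degree v := by
    calc ∑ v, (∑ x ∈ G.neighborFinset v, G.degree x) ≤ ∑ _v : Fin n, n + ∑ v, G.degree v := by
          rw [← Finset.sum_add_distrib]
          exact Finset.sum_le_sum fun v _ => f_le h4 v
      _ = n * n + ∑ v, G.degree v := by rw [Finset.sum_const]; simp [Nat.mul_comm]
  have hw2 : ∑ v, G.degree v * G.degree v ≤ n * n + ∑ v, G.degree v := hsumf ▸ hfle
  have step : 2 * ∑ v, G.degree v * (∑ x ∈ G.neighborFinset v, G.degree x) ≤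
      n * (∑ v, G.degree v) + 8 * (∑ v, G.degree v * G.degree v) := by
    rw [← hL]
    exact main.trans ((Finset.sum_le_sum fun u _ => hR u).trans_eq hsum2)
  have : 8 * (∑ v, G.degree v * G.degree v) ≤ 8 * (n * n + ∑ v, G.degree v) :=
    Nat.mul_le_mul_left _ hw2
  omega


lemma holder_bound :
    (∑ v, (G.degree v : ℝ)) ^ 3 ≤ (n : ℝ) * (n : ℝ) *
      ∑ v, (G.degree v : ℝ) * (∑ x ∈ G.neighborFinset v, (G.degree x : ℝ)) := by
  classical
  set D : Fin n → ℝ := fun v => (G.degree v : ℝ) with hD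
  set F : Fin n → ℝ := fun v => ∑ x ∈ G.neighborFinset v, (G.degree x : ℝ) with hF
  have hD0 : ∀ v, 0 ≤ D v := fun v => Nat.cast_nonneg _
  have hd1 : ∀ v x, x ∈ G.neighborFinset v → 1 ≤ D x := by
    intro v x hx
    rw [SimpleGraph.mem_neighborFinset] at hx
    have : 0 < G.degree x := by
      rw [SimpleGraph.degree_pos_iff_exists_adj]
      exact ⟨v, hx.symm⟩
    simp only [hD]
    exact_mod_cast this
  have hF0 : ∀ v, 0 ≤ F v := fun v => Finset.sum_nonneg fun x _ => Nat.cast_nonneg _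
  have hDF : ∀ v, D v ≤ F v := by
    intro v
    have : ∀ x ∈ G.neighborFinset v, (1:ℝ) ≤ (G.degree x : ℝ) := fun x hx => hd1 v x hx
    calc D v = ((G.neighborFinset v).card : ℝ) := by
          simp only [hD, SimpleGraph.card_neighborFinset_eq_degree]
      _ = ∑ _x ∈ G.neighborFinset v, (1:ℝ) := by
          rw [Finset.sum_const, nsmul_eq_mul, mul_one]
      _ ≤ F v := Finset.sum_le_sum this
  have hFpos : ∀ v, D v ≠ 0 → 0 < F v := by
    intro v hv
    have h1 : 0 < D v := lt_of_le_of_ne (hD0 v) (Ne.symm hv)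
    exact h1.trans_le (hDF v)
  have hDzero : ∀ v, F v = 0 → D v = 0 := by
    intro v hv
    by_contra h
    exact absurd hv (ne_of_gt (hFpos v h))
  set w : Fin n → ℝ := fun v => D v / Real.sqrt (F v) with hw
  set g : Fin n → ℝ := fun v => Real.sqrt (F v) with hg
  have hw0 : ∀ v, 0 ≤ w v := fun v => div_nonneg (hD0 v) (Real.sqrt_nonneg _)
  have hg0 : ∀ v, 0 ≤ g v := fun v => Real.sqrt_nonneg _
  have hwg : ∀ v, w v * g v = D v := by
    intro v
    rcases eq_or_ne (F v) 0 with h | h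
    · simp [hw, hg, h, hDzero v h]
    · have : Real.sqrt (F v) ≠ 0 := Real.sqrt_ne_zero'.mpr (lt_of_le_of_ne (hF0 v) (Ne.symm h))
      exact div_mul_cancel₀ (D v) this
  have hwg3 : ∀ v, w v * (g v) ^ (3:ℝ) = D v * F v := by
    intro v
    have h3 : (g v) ^ (3:ℝ) = (g v) ^ (3:ℕ) := by
      rw [← Real.rpow_natCast (g v) 3]; norm_num
    rcases eq_or_ne (F v) 0 with h | h
    · simp [hw, hg, h, hDzero v h, h3]
    · have hFv : 0 < F v := lt_of_le_of_ne (hF0 v) (Ne.symm h)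
      have hs : Real.sqrt (F v) ≠ 0 := Real.sqrt_ne_zero'.mpr hFv
      rw [h3]
      have : (g v) ^ (3:ℕ) = F v * Real.sqrt (F v) := by
        rw [hg]
        rw [pow_succ, sq, Real.mul_self_sqrt (hF0 v)]
      rw [this, hw]
      field_simp
  -- Hölder with p = 3
  have holder := Real.inner_le_weight_mul_Lp_of_nonneg Finset.univ (p := 3) (by norm_num)
    w g hw0 hg0
  rw [Finset.sum_congr rfl fun v _ => hwg v, Finset.sum_congr rfl fun v _ => hwg3 v] at holder
  -- bound (∑ w)² ≤ n * n
  set s : Finset (Fin n) := Finset.univ.filter (fun v => D v ≠ 0) with hs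
  have hwzero : ∀ v ∈ Finset.univ, v ∉ s → w v = 0 := by
    intro v _ hv
    rw [hs] at hv
    simp only [Finset.mem_filter, Finset.mem_univ, true_and, not_not] at hv
    simp [hw, hv]
  have hRs : ∑ v, w v = ∑ v ∈ s, w v :=
    (Finset.sum_subset (Finset.filter_subset _ _) hwzero).symm
  have hQ : ∑ v ∈ s, (D v)^2 / F v ≤ (n:ℝ) := by
    have hper : ∀ v ∈ s, (D v)^2 / F v ≤ ∑ x ∈ G.neighborFinset v, (D x)⁻¹ := by
      intro v hv
      rw [hs, Finset.mem_filter] at hv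
      have hFv : 0 < F v := hFpos v hv.2
      have hcs := Finset.sum_mul_sq_le_sq_mul_sq (G.neighborFinset v)
        (fun x => Real.sqrt (D x)) (fun x => (Real.sqrt (D x))⁻¹)
      have h1 : ∀ x ∈ G.neighborFinset v,
          Real.sqrt (D x) * (Real.sqrt (D x))⁻¹ = 1 := by
        intro x hx
        have : Real.sqrt (D x) ≠ 0 :=
          Real.sqrt_ne_zero'.mpr (lt_of_lt_of_le zero_lt_one (hd1 v x hx))
        field_simp
      have h2 : ∀ x ∈ G.neighborFinset v, Real.sqrt (D x) ^ 2 = D x := fun x hx =>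
        Real.sq_sqrt (hD0 x)
      have h3 : ∀ x ∈ G.neighborFinset v, ((Real.sqrt (D x))⁻¹) ^ 2 = (D x)⁻¹ := by
        intro x hx
        rw [inv_pow, Real.sq_sqrt (hD0 x)]
      rw [Finset.sum_congr rfl h1, Finset.sum_congr rfl h2, Finset.sum_congr rfl h3] at hcs
      rw [Finset.sum_const, nsmul_eq_mul, mul_one] at hcs
      have hcard : ((G.neighborFinset v).card : ℝ) = D v := by
        rw [hD, SimpleGraph.card_neighborFinset_eq_degree]
      rw [hcard] at hcs
      rw [div_le_iff₀ hFv]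
      calc (D v)^2 ≤ F v * ∑ x ∈ G.neighborFinset v, (D x)⁻¹ := hcs
        _ = (∑ x ∈ G.neighborFinset v, (D x)⁻¹) * F v := mul_comm _ _
    calc ∑ v ∈ s, (D v)^2 / F v ≤ ∑ v ∈ s, ∑ x ∈ G.neighborFinset v, (D x)⁻¹ :=
          Finset.sum_le_sum hper
      _ ≤ ∑ v, ∑ x ∈ G.neighborFinset v, (D x)⁻¹ :=
          Finset.sum_le_sum_of_subset_of_nonneg (Finset.filter_subset _ _)
            (fun v _ _ => Finset.sum_nonneg fun x _ => inv_nonneg.mpr (hD0 x))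
      _ = ∑ x, (G.degree x) • (D x)⁻¹ := swapSum _
      _ ≤ ∑ _x : Fin n, (1:ℝ) := by
          refine Finset.sum_le_sum fun x _ => ?_
          rw [nsmul_eq_mul]
          rcases eq_or_ne (G.degree x) 0 with h | h
          · simp [h]
          · have hx : (G.degree x : ℝ) ≠ 0 := Nat.cast_ne_zero.mpr h
            rw [hD]
            rw [mul_inv_cancel₀ hx]
      _ = (n:ℝ) := by simp
  have hR2 : (∑ v, w v)^2 ≤ (n:ℝ) * (n:ℝ) := by
    rw [hRs]
    have hcs := Finset.sum_mul_sq_le_sq_mul_sq s (fun _ => (1:ℝ)) w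
    simp only [one_mul, one_pow] at hcs
    have hsq : ∀ v ∈ s, (w v)^2 = (D v)^2 / F v := by
      intro v hv
      rw [hs, Finset.mem_filter] at hv
      have hFv : 0 < F v := hFpos v hv.2
      rw [hw]
      rw [div_pow, Real.sq_sqrt (hF0 v)]
    rw [Finset.sum_congr rfl hsq, Finset.sum_const, nsmul_eq_mul, mul_one] at hcs
    have hcard : (s.card : ℝ) ≤ (n:ℝ) := by
      have h := Finset.card_le_univ s
      simp only [Finset.card_univ, Fintype.card_fin] at h
      exact_mod_cast h
    calc (∑ v ∈ s, w v)^2 ≤ (s.card : ℝ) * ∑ v ∈ s, (D v)^2 / F v := hcs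
      _ ≤ (n:ℝ) * (n:ℝ) := by
          have h0 : (0:ℝ) ≤ ∑ v ∈ s, (D v)^2 / F v := by
            refine Finset.sum_nonneg fun v hv => ?_
            exact div_nonneg (sq_nonneg _) (hF0 v)
          exact mul_le_mul hcard hQ h0 (Nat.cast_nonneg _)
  -- assemble
  have hMR0 : 0 ≤ ∑ v, D v := Finset.sum_nonneg fun v _ => hD0 v
  have hW0 : 0 ≤ ∑ v, D v * F v :=
    Finset.sum_nonneg fun v _ => mul_nonneg (hD0 v) (hF0 v)
  have hR0 : 0 ≤ ∑ v, w v := Finset.sum_nonneg fun v _ => hw0 v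
  have hcube := pow_le_pow_left₀ hMR0 holder 3
  have hrw : ((∑ v, w v) ^ (1 - (3:ℝ)⁻¹) * (∑ v, D v * F v) ^ (3:ℝ)⁻¹) ^ 3 =
      ((∑ v, w v)^2) * (∑ v, D v * F v) := by
    rw [mul_pow]
    have e1 : ((∑ v, w v) ^ (1 - (3:ℝ)⁻¹)) ^ (3:ℕ) = (∑ v, w v)^2 := by
      rw [← Real.rpow_natCast ((∑ v, w v) ^ (1 - (3:ℝ)⁻¹)) 3, ← Real.rpow_mul hR0]
      norm_num
    have e2 : ((∑ v, D v * F v) ^ (3:ℝ)⁻¹) ^ (3:ℕ) = ∑ v, D v * F v := by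
      rw [← Real.rpow_natCast ((∑ v, D v * F v) ^ (3:ℝ)⁻¹) 3, ← Real.rpow_mul hW0]
      norm_num
    rw [e1, e2]
  rw [hrw] at hcube
  calc (∑ v, D v)^3 ≤ ((∑ v, w v)^2) * (∑ v, D v * F v) := hcube
    _ ≤ (n:ℝ) * (n:ℝ) * (∑ v, D v * F v) := mul_le_mul_of_nonneg_right hR2 hW0

end aux

theorem erdos_simonovits :
    ∀ ε : ℝ, 0 < ε → ∃ N : ℕ, ∀ n : ℕ, N ≤ n →
      ∀ G : SimpleGraph (Fin n), C4Free G → C5Free G →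
        (G.edgeSet.ncard : ℝ) ≤ (1 / (2 * Real.sqrt 2) + ε) * (n : ℝ) ^ ((3 : ℝ) / 2) := by
  intro ε hε
  refine ⟨⌈16/ε^2 + 4/ε⌉₊ + 1, ?_⟩
  intro n hn G h4 h5
  classical
  haveI : DecidableRel G.Adj := Classical.decRel _
  have hn1 : 1 ≤ n := le_trans (Nat.le_add_left 1 _) hn
  have hnR : (16/ε^2 + 4/ε : ℝ) ≤ (n : ℝ) := by
    have h1 : (16/ε^2 + 4/ε : ℝ) ≤ (⌈16/ε^2 + 4/ε⌉₊ : ℝ) := Nat.le_ceil _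
    have h2 : (⌈16/ε^2 + 4/ε⌉₊ : ℝ) ≤ (n:ℝ) := by
      exact_mod_cast le_trans (Nat.le_succ _) hn
    linarith
  set r : ℝ := Real.sqrt (n : ℝ) with hr
  set s2 : ℝ := Real.sqrt 2 with hs2def
  have hs2sq : s2^2 = 2 := Real.sq_sqrt (by norm_num)
  have hs2one : 1 ≤ s2 := by
    rw [hs2def]
    rw [show (1:ℝ) = Real.sqrt 1 by simp]
    exact Real.sqrt_le_sqrt (by norm_num)
  have hn0 : (0:ℝ) ≤ (n:ℝ) := Nat.cast_nonneg n
  have hnr2 : (n:ℝ) = r^2 := (Real.sq_sqrt hn0).symm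
  have hr0 : 0 ≤ r := Real.sqrt_nonneg _
  have hr1 : 1 ≤ r := by
    rw [hr, show (1:ℝ) = Real.sqrt 1 by simp]
    exact Real.sqrt_le_sqrt (by exact_mod_cast hn1)
  have hre : 4 ≤ ε * r := by
    have h169 : 16/ε^2 ≤ (n:ℝ) := by
      have : (0:ℝ) ≤ 4/ε := by positivity
      linarith
    have h4e : 4/ε ≤ r := by
      rw [hr]
      rw [show (4:ℝ)/ε = Real.sqrt ((4/ε)^2) by
        rw [Real.sqrt_sq (by positivity)]]
      apply Real.sqrt_le_sqrt
      calc (4/ε)^2 = 16/ε^2 := by ring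
        _ ≤ (n:ℝ) := h169
    calc (4:ℝ) = ε * (4/ε) := by field_simp
      _ ≤ ε * r := by apply mul_le_mul_of_nonneg_left h4e hε.le
  -- the power identity
  have hpow : (n : ℝ) ^ ((3:ℝ)/2) = r^3 := by
    rw [show (3:ℝ)/2 = (1/2) * ((3:ℕ):ℝ) by norm_num, Real.rpow_mul hn0,
      Real.rpow_natCast, ← Real.sqrt_eq_rpow]
  -- edge count
  set m : ℝ := (G.edgeFinset.card : ℝ) with hm
  have hedge : (G.edgeSet.ncard : ℝ) = m := by
    rw [hm]
    congr 1
    rw [← Set.ncard_coe_finset]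
    congr 1
    simp
  have hM : (∑ v, (G.degree v:ℝ)) = 2 * m := by
    rw [hm]
    have := G.sum_degrees_eq_twice_card_edges
    push_cast [← this]
    norm_cast
  -- the two main inequalities
  set WR : ℝ := ∑ v, (G.degree v : ℝ) * (∑ x ∈ G.neighborFinset v, (G.degree x : ℝ)) with hWR
  have h1 : (2*m)^3 ≤ (n:ℝ) * (n:ℝ) * WR := by
    rw [← hM]
    exact holder_bound
  have h2 : 2 * WR ≤ (n:ℝ) * (2*m) + 8*((n:ℝ)*(n:ℝ) + 2*m) := by
    have hg := global_nat h4 h5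
    have hcast : (2:ℝ) * (∑ v, (G.degree v:ℝ) * (∑ x ∈ G.neighborFinset v, (G.degree x:ℝ))) ≤
        (n:ℝ) * (∑ v, (G.degree v:ℝ)) + 8*((n:ℝ)*(n:ℝ) + ∑ v, (G.degree v:ℝ)) := by
      exact_mod_cast hg
    rw [hM] at hcast
    rw [hWR]
    exact hcast
  have hWR0 : 0 ≤ WR := by
    rw [hWR]
    refine Finset.sum_nonneg fun v _ => mul_nonneg (Nat.cast_nonneg _) ?_
    exact Finset.sum_nonneg fun x _ => Nat.cast_nonneg _
  have h3 : (n:ℝ)*(n:ℝ)*(2*WR) ≤ (n:ℝ)*(n:ℝ)*((n:ℝ)*(2*m) + 8*((n:ℝ)*(n:ℝ) + 2*m)) :=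
    mul_le_mul_of_nonneg_left h2 (by positivity)
  have hm0 : (0:ℝ) ≤ m := Nat.cast_nonneg _
  have key : 8*m^3 ≤ m*r^6 + 4*r^8 + 8*m*r^4 := by
    rw [hnr2] at h1 h3
    linarith
  rw [hedge, hpow]
  clear_value WR m r s2
  have hs2pos : 0 < s2 := lt_of_lt_of_le zero_lt_one hs2one
  set c : ℝ := 1/(2*s2) with hc
  have hcpos : 0 < c := by positivity
  have hc4 : 4*c = s2 := by
    rw [hc]
    rw [eq_comm]
    field_simp
    linarith [hs2sq]
  have hc8 : 8*c^2 = 1 := by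
    rw [hc, div_pow, mul_pow, hs2sq]
    norm_num
  -- final case analysis
  by_cases hcase : m ≤ c * r^3
  · have h5 : 0 ≤ ε * r^3 := by positivity
    linarith
  · push_neg at hcase
    have hr3pos : 0 < r^3 := pow_pos (lt_of_lt_of_le zero_lt_one hr1) 3
    have hrm : r^3 ≤ 2*s2*m := by
      have h7 : (2*s2)*(c*r^3) ≤ (2*s2)*m :=
        mul_le_mul_of_nonneg_left hcase.le (by positivity)
      have h9 : 2*s2*c = 1 := by
        rw [← hc4]
        linear_combination hc8
      calc r^3 = (2*s2*c)*r^3 := by rw [h9]; ring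
        _ = (2*s2)*(c*r^3) := by ring
        _ ≤ (2*s2)*m := h7
        _ = 2*s2*m := by ring
    have hmpos : 0 < m := by
      rcases lt_or_ge 0 m with h | h
      · exact h
      · exfalso
        have h11 : 2*s2*m ≤ 2*s2*0 := mul_le_mul_of_nonneg_left h (by positivity)
        rw [mul_zero] at h11
        linarith
    -- divide the cubic inequality by m
    have hsq : 8*m^2 ≤ r^6 + 8*s2*r^5 + 8*r^4 := by
      have h8 : 4*r^8 ≤ (4*r^5)*(2*s2*m) := by
        have e : 4*r^8 = (4*r^5)*r^3 := by ring
        have f : (4*r^5)*r^3 ≤ (4*r^5)*(2*s2*m) :=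
          mul_le_mul_of_nonneg_left hrm (by positivity)
        linarith [e ▸ f]
      have h9 : 8*m^3 ≤ m*r^6 + 8*s2*m*r^5 + 8*m*r^4 := by linarith
      have h10 : m*(8*m^2) ≤ m*(r^6 + 8*s2*r^5 + 8*r^4) := by linarith
      exact (mul_le_mul_iff_right₀ hmpos).mp h10
    set K : ℝ := (c + ε) * r^3 with hK
    have hK0 : 0 ≤ K := by positivity
    have hKex : 8*K^2 = 8*c^2*r^6 + 16*c*ε*r^6 + 8*ε^2*r^6 := by rw [hK]; ring
    have stepa : (16*c*r^5)*4 ≤ 16*c*ε*r^6 := by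
      have h12 : (16*c*r^5)*4 ≤ (16*c*r^5)*(ε*r) :=
        mul_le_mul_of_nonneg_left hre (by positivity)
      linarith [h12]
    have stepb : (16*c*r^5)*4 = 16*s2*r^5 := by
      have h13 : (16*c*r^5)*4 = (4*c)*(16*r^5) := by ring
      rw [h13, hc4]
      ring
    have stepc : 8*s2*r^5 + 8*r^4 ≤ 16*s2*r^5 := by
      have hsr : 1 ≤ s2*r := by
        have := mul_le_mul hs2one hr1 zero_le_one (le_trans zero_le_one hs2one)
        linarith
      have h14 : 0 ≤ 8*r^4*(s2*r - 1) := by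
        apply mul_nonneg (by positivity)
        linarith
      linarith [h14]
    have hbig : 8*s2*r^5 + 8*r^4 ≤ 16*c*ε*r^6 := by
      calc 8*s2*r^5 + 8*r^4 ≤ 16*s2*r^5 := stepc
        _ = (16*c*r^5)*4 := stepb.symm
        _ ≤ 16*c*ε*r^6 := stepa
    have hc8r : 8*c^2*r^6 = r^6 := by linear_combination r^6 * hc8
    have he2 : 0 ≤ 8*ε^2*r^6 := by positivity
    have hmK : m^2 ≤ K^2 := by linarith
    calc m = Real.sqrt (m^2) := (Real.sqrt_sq hm0).symm
      _ ≤ Real.sqrt (K^2) := Real.sqrt_le_sqrt hmK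
      _ = K := Real.sqrt_sq hK0
end
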